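/- arXiv:0812.3186 — 5 statements merged into one kernel-verified Lean document; each statement's English description precedes it below -/
import Mathlib

section
/- Let x be an infinite word over an alphabet of size k. Then liminf_{r→∞} C_{(0,r)} ≤ 1 − 1/k, where C_{(0,r)} = liminf_{N→∞} (1/N) Σ_{n<N} δ(n, n+r). -/
open Filter Finset

namespace AutoCorrAux

noncomputable def E (x : ℕ → ℕ) (r N : ℕ) : ℝ :=
  ∑ m ∈ Finset.range N, (if x m = x (m + r) then (1:ℝ) else 0)

lemma E_nonneg (x : ℕ → ℕ) (r N : ℕ) : 0 ≤ E x r N :=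
  Finset.sum_nonneg fun _ _ => by split_ifs <;> norm_num

variable {k : ℕ} {x : ℕ → ℕ}




lemma cs_bound (hk : 0 < k) (hx : ∀ n, x n < k) (n M R : ℕ) :
    ((R:ℝ)+1)^2 ≤ (k:ℝ) * ∑ j ∈ range (R+1), ∑ i ∈ range (R+1),
      (if x (n + j*M) = x (n + i*M) then (1:ℝ) else 0) := by
  set c : ℕ → ℝ := fun a => ∑ j ∈ range (R+1), if x (n + j*M) = a then (1:ℝ) else 0 with hc
  have hsum : ∑ a ∈ range k, c a = (R:ℝ)+1 := by
    rw [hc, Finset.sum_comm]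
    have : ∀ j ∈ range (R+1), (∑ a ∈ range k, if x (n + j*M) = a then (1:ℝ) else 0) = 1 := by
      intro j _
      rw [Finset.sum_ite_eq (range k) (x (n + j*M)) (fun _ => (1:ℝ))]
      simp [hx]
    rw [Finset.sum_congr rfl this]
    simp
  have key : ∀ j i : ℕ, (∑ a ∈ range k,
      (if x (n + j*M) = a then (1:ℝ) else 0) * (if x (n + i*M) = a then (1:ℝ) else 0))
      = if x (n + j*M) = x (n + i*M) then (1:ℝ) else 0 := by
    intro j i
    by_cases h : x (n + j*M) = x (n + i*M)
    · rw [if_pos h]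
      have : ∀ a ∈ range k, (if x (n + j*M) = a then (1:ℝ) else 0) * (if x (n + i*M) = a then (1:ℝ) else 0) = if x (n + j*M) = a then (1:ℝ) else 0 := by
        intro a _; rw [h]; split_ifs <;> norm_num
      rw [Finset.sum_congr rfl this, Finset.sum_ite_eq (range k) (x (n + j*M)) (fun _ => (1:ℝ))]
      simp [hx]
    · rw [if_neg h]
      apply Finset.sum_eq_zero
      intro a _
      split_ifs with h1 h2
      · exact absurd (h1.trans h2.symm) h
      all_goals norm_num
  have hsq : ∑ a ∈ range k, (c a)^2 = ∑ j ∈ range (R+1), ∑ i ∈ range (R+1),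
      (if x (n + j*M) = x (n + i*M) then (1:ℝ) else 0) := by
    have expand : ∀ a, (c a)^2 = ∑ j ∈ range (R+1), ∑ i ∈ range (R+1),
        (if x (n + j*M) = a then (1:ℝ) else 0) * (if x (n + i*M) = a then (1:ℝ) else 0) := by
      intro a
      rw [sq, hc, Finset.sum_mul_sum]
    rw [Finset.sum_congr rfl (fun a _ => expand a), Finset.sum_comm]
    refine Finset.sum_congr rfl fun j _ => ?_
    rw [Finset.sum_comm]
    exact Finset.sum_congr rfl fun i _ => key j i
  have hCS := sq_sum_le_card_mul_sum_sq (s := range k) (f := c)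
  rw [hsum, Finset.card_range, hsq] at hCS
  exact hCS


variable {x : ℕ → ℕ}

lemma triangle (x : ℕ → ℕ) (n M R : ℕ) :
    ∑ j ∈ range (R+1), ∑ i ∈ range (R+1), (if x (n + j*M) = x (n + i*M) then (1:ℝ) else 0)
      = ((R:ℝ)+1) + 2 * ∑ p ∈ (range R).sigma (fun e => range (R - e)),
        (if x (n + p.2*M) = x (n + p.2*M + (p.1+1)*M) then (1:ℝ) else 0) := by
  classical
  set A : Finset (ℕ × ℕ) := range (R+1) ×ˢ range (R+1) with hA
  set F : ℕ × ℕ → ℝ := fun p => if x (n + p.1*M) = x (n + p.2*M) then 1 else 0 with hF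
  have h0 : ∑ j ∈ range (R+1), ∑ i ∈ range (R+1),
      (if x (n + j*M) = x (n + i*M) then (1:ℝ) else 0) = ∑ p ∈ A, F p := by
    rw [hA, Finset.sum_product]
  rw [h0]
  rw [← Finset.sum_filter_add_sum_filter_not A (fun p => p.1 = p.2) F]
  have hdiag : ∑ p ∈ A.filter (fun p => p.1 = p.2), F p = (R:ℝ)+1 := by
    have himg : A.filter (fun p => p.1 = p.2) = (range (R+1)).image (fun a => (a,a)) := by
      ext p
      simp only [hA, Finset.mem_filter, Finset.mem_product, Finset.mem_image, Finset.mem_range]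
      constructor
      · rintro ⟨⟨h1, h2⟩, h3⟩
        exact ⟨p.1, h1, by rcases p with ⟨a,b⟩; simp_all⟩
      · rintro ⟨a, ha, rfl⟩; exact ⟨⟨ha, ha⟩, rfl⟩
    rw [himg, Finset.sum_image (by intro a _ b _ h; simpa using h)]
    simp [hF]
  rw [hdiag]
  set B := A.filter (fun p => ¬ p.1 = p.2) with hB
  rw [← Finset.sum_filter_add_sum_filter_not B (fun p => p.1 < p.2) F]
  have hB1 : B.filter (fun p => p.1 < p.2) = A.filter (fun p => p.1 < p.2) := by
    rw [hB, Finset.filter_filter]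
    exact Finset.filter_congr (fun p _ => by constructor <;> (intro h; omega))
  have hB2 : B.filter (fun p => ¬ p.1 < p.2) = A.filter (fun p => p.2 < p.1) := by
    rw [hB, Finset.filter_filter]
    exact Finset.filter_congr (fun p _ => by constructor <;> (intro h; omega))
  set T := (range R).sigma (fun e => range (R - e)) with hT
  set G : (Σ _ : ℕ, ℕ) → ℝ := fun p =>
    if x (n + p.2*M) = x (n + p.2*M + (p.1+1)*M) then 1 else 0 with hG
  have hmul : ∀ a b c : ℕ, a ≤ b → a * c + (b - a) * c = b * c := by
    intro a b c h
    rw [← Nat.add_mul, Nat.add_sub_cancel' h]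
  have hsum1 : ∑ p ∈ A.filter (fun p => p.1 < p.2), F p = ∑ p ∈ T, G p := by
    refine Finset.sum_nbij' (fun p => (⟨p.2 - p.1 - 1, p.1⟩ : Σ _ : ℕ, ℕ))
      (fun q => (q.2, q.2 + q.1 + 1)) ?_ ?_ ?_ ?_ ?_
    · intro p hp
      simp only [hA, Finset.mem_filter, Finset.mem_product, Finset.mem_range] at hp
      simp only [hT, Finset.mem_sigma, Finset.mem_range]
      omega
    · intro q hq
      simp only [hT, Finset.mem_sigma, Finset.mem_range] at hq
      simp only [hA, Finset.mem_filter, Finset.mem_product, Finset.mem_range]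
      omega
    · intro p hp
      simp only [hA, Finset.mem_filter, Finset.mem_product, Finset.mem_range] at hp
      rcases p with ⟨a, b⟩
      simp only []
      congr 1 <;> omega
    · intro q hq
      simp only [hT, Finset.mem_sigma, Finset.mem_range] at hq
      rcases q with ⟨d, j⟩
      simp only []
      congr 1 <;> omega
    · intro p hp
      simp only [hA, Finset.mem_filter, Finset.mem_product, Finset.mem_range] at hp
      rcases p with ⟨a, b⟩
      simp only [hF, hG]
      have hab : a < b := hp.2
      have h1 : b - a - 1 + 1 = b - a := by omega
      have h2 : n + a*M + (b - a)*M = n + b*M := by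
        rw [add_assoc, hmul a b M (le_of_lt hab)]
      rw [h1, h2]
  have hsum2 : ∑ p ∈ A.filter (fun p => p.2 < p.1), F p = ∑ p ∈ T, G p := by
    refine Finset.sum_nbij' (fun p => (⟨p.1 - p.2 - 1, p.2⟩ : Σ _ : ℕ, ℕ))
      (fun q => (q.2 + q.1 + 1, q.2)) ?_ ?_ ?_ ?_ ?_
    · intro p hp
      simp only [hA, Finset.mem_filter, Finset.mem_product, Finset.mem_range] at hp
      simp only [hT, Finset.mem_sigma, Finset.mem_range]
      omega
    · intro q hq
      simp only [hT, Finset.mem_sigma, Finset.mem_range] at hq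
      simp only [hA, Finset.mem_filter, Finset.mem_product, Finset.mem_range]
      omega
    · intro p hp
      simp only [hA, Finset.mem_filter, Finset.mem_product, Finset.mem_range] at hp
      rcases p with ⟨a, b⟩
      simp only []
      congr 1 <;> omega
    · intro q hq
      simp only [hT, Finset.mem_sigma, Finset.mem_range] at hq
      rcases q with ⟨d, j⟩
      simp only []
      congr 1 <;> omega
    · intro p hp
      simp only [hA, Finset.mem_filter, Finset.mem_product, Finset.mem_range] at hp
      rcases p with ⟨a, b⟩
      simp only [hF, hG]
      have hba : b < a := hp.2
      have h1 : a - b - 1 + 1 = a - b := by omega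
      have h2 : n + b*M + (a - b)*M = n + a*M := by
        rw [add_assoc, hmul b a M (le_of_lt hba)]
      rw [h1, h2]
      exact if_congr eq_comm rfl rfl
  rw [hB1, hB2, hsum1, hsum2]
  ring




lemma shift_le (x : ℕ → ℕ) (r j N : ℕ) :
    ∑ n ∈ range N, (if x (n + j) = x (n + j + r) then (1:ℝ) else 0) ≤ E x r N + j := by
  have h1 : E x r (j + N) = E x r j
      + ∑ i ∈ range N, (if x (j + i) = x (j + i + r) then (1:ℝ) else 0) :=
    Finset.sum_range_add (fun m => if x m = x (m + r) then (1:ℝ) else 0) j N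
  have h2 : E x r (N + j) = E x r N
      + ∑ i ∈ range j, (if x (N + i) = x (N + i + r) then (1:ℝ) else 0) :=
    Finset.sum_range_add (fun m => if x m = x (m + r) then (1:ℝ) else 0) N j
  have h3 : ∑ n ∈ range N, (if x (n + j) = x (n + j + r) then (1:ℝ) else 0)
      = ∑ i ∈ range N, (if x (j + i) = x (j + i + r) then (1:ℝ) else 0) := by
    refine Finset.sum_congr rfl fun i _ => ?_
    rw [add_comm i j]
  have h4 : ∑ i ∈ range j, (if x (N + i) = x (N + i + r) then (1:ℝ) else 0) ≤ j := by
    calc ∑ i ∈ range j, (if x (N + i) = x (N + i + r) then (1:ℝ) else 0)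
        ≤ ∑ i ∈ range j, (1:ℝ) := Finset.sum_le_sum fun i _ => by split_ifs <;> norm_num
      _ = j := by simp
  have h5 : E x r (j + N) = E x r (N + j) := by rw [add_comm]
  have h6 := E_nonneg x r j
  rw [h3]
  linarith

lemma card_T (R : ℕ) : (((range R).sigma (fun e => range (R - e))).card) * 2 = R * (R+1) := by
  rw [Finset.card_sigma]
  simp only [Finset.card_range]
  have h1 : ∑ e ∈ range R, (R - e) = ∑ j ∈ range R, (j + 1) := by
    rw [← Finset.sum_range_reflect (fun j => R - j) R]
    refine Finset.sum_congr rfl fun j hj => ?_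
    rw [Finset.mem_range] at hj
    omega
  rw [h1, Finset.sum_add_distrib, Finset.sum_const, Finset.card_range, add_mul,
    Finset.sum_range_id_mul_two]
  cases R with
  | zero => rfl
  | succ r => simp [Nat.succ_sub_one]; ring




lemma main_est (hk : 0 < k) (hx : ∀ n, x n < k) (M R N : ℕ) (hR : 1 ≤ R) :
    ∃ d : ℕ, 1 ≤ d ∧ d ≤ R ∧
      (N:ℝ) * (1/(k:ℝ) - 1/(R:ℝ)) - (R:ℝ)*(M:ℝ) ≤ E x (d*M) N := by
  classical
  set T := (range R).sigma (fun e => range (R - e)) with hT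
  have hkpos : (0:ℝ) < k := by exact_mod_cast hk
  have hRpos : (0:ℝ) < R := by exact_mod_cast hR
  -- pointwise estimate
  have step1 : ∀ n : ℕ, ((R:ℝ)+1)^2/(k:ℝ) - ((R:ℝ)+1)
      ≤ 2 * ∑ p ∈ T, (if x (n + p.2*M) = x (n + p.2*M + (p.1+1)*M) then (1:ℝ) else 0) := by
    intro n
    have h1 := cs_bound hk hx n M R
    rw [triangle x n M R] at h1
    have h2 : ((R:ℝ)+1)^2/(k:ℝ) ≤ ((R:ℝ)+1)
        + 2 * ∑ p ∈ T, (if x (n + p.2*M) = x (n + p.2*M + (p.1+1)*M) then (1:ℝ) else 0) := by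
      rw [div_le_iff₀ hkpos]
      linarith [h1]
    linarith
  -- sum over n < N
  have step2 : (N:ℝ) * (((R:ℝ)+1)^2/(k:ℝ) - ((R:ℝ)+1))
      ≤ 2 * ∑ p ∈ T, (E x ((p.1+1)*M) N + (R:ℝ)*(M:ℝ)) := by
    have hA : (N:ℝ) * (((R:ℝ)+1)^2/(k:ℝ) - ((R:ℝ)+1))
        = ∑ _n ∈ range N, (((R:ℝ)+1)^2/(k:ℝ) - ((R:ℝ)+1)) := by
      rw [Finset.sum_const, Finset.card_range, nsmul_eq_mul]
    rw [hA]
    calc ∑ n ∈ range N, (((R:ℝ)+1)^2/(k:ℝ) - ((R:ℝ)+1))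
        ≤ ∑ n ∈ range N, 2 * ∑ p ∈ T,
          (if x (n + p.2*M) = x (n + p.2*M + (p.1+1)*M) then (1:ℝ) else 0) :=
          Finset.sum_le_sum fun n _ => step1 n
      _ = 2 * ∑ p ∈ T, ∑ n ∈ range N,
          (if x (n + p.2*M) = x (n + p.2*M + (p.1+1)*M) then (1:ℝ) else 0) := by
          rw [← Finset.mul_sum, Finset.sum_comm]
      _ ≤ 2 * ∑ p ∈ T, (E x ((p.1+1)*M) N + (R:ℝ)*(M:ℝ)) := by
          have : ∀ p ∈ T, ∑ n ∈ range N,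
              (if x (n + p.2*M) = x (n + p.2*M + (p.1+1)*M) then (1:ℝ) else 0)
              ≤ E x ((p.1+1)*M) N + (R:ℝ)*(M:ℝ) := by
            intro p hp
            have h1 := shift_le x ((p.1+1)*M) (p.2*M) N
            have hp2 : p.2 < R := by
              simp only [hT, Finset.mem_sigma, Finset.mem_range] at hp
              omega
            have h2 : ((p.2*M : ℕ) : ℝ) ≤ (R:ℝ)*(M:ℝ) := by
              have : p.2 * M ≤ R * M := Nat.mul_le_mul_right M (le_of_lt hp2)
              push_cast
              exact_mod_cast this
            linarith
          linarith [Finset.sum_le_sum this]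
  -- pigeonhole
  have hTne : T.Nonempty := ⟨⟨0,0⟩, by
    simp only [hT, Finset.mem_sigma, Finset.mem_range]; omega⟩
  have hcard : ((T.card : ℝ)) * 2 = (R:ℝ) * ((R:ℝ)+1) := by
    have := card_T R
    rw [hT]
    exact_mod_cast congrArg (fun m : ℕ => (m:ℝ)) this
  have hsum_le : ∑ _p ∈ T, ((N:ℝ) * (1/(k:ℝ) - 1/(R:ℝ)) - (R:ℝ)*(M:ℝ))
      ≤ ∑ p ∈ T, E x ((p.1+1)*M) N := by
    rw [Finset.sum_const, nsmul_eq_mul]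
    have hexp : ∑ p ∈ T, (E x ((p.1+1)*M) N + (R:ℝ)*(M:ℝ))
        = (∑ p ∈ T, E x ((p.1+1)*M) N) + (T.card : ℝ) * ((R:ℝ)*(M:ℝ)) := by
      rw [Finset.sum_add_distrib, Finset.sum_const, nsmul_eq_mul]
    rw [hexp] at step2
    -- key: card * N * (1/k - 1/R) * 2 ≤ N * ((R+1)^2/k - (R+1))
    have hkey : (T.card : ℝ) * ((N:ℝ) * (1/(k:ℝ) - 1/(R:ℝ))) * 2
        ≤ (N:ℝ) * (((R:ℝ)+1)^2/(k:ℝ) - ((R:ℝ)+1)) := by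
      have h1 : (T.card : ℝ) * ((N:ℝ) * (1/(k:ℝ) - 1/(R:ℝ))) * 2
          = (N:ℝ) * (((R:ℝ) * ((R:ℝ)+1)) * (1/(k:ℝ) - 1/(R:ℝ))) := by
        rw [show (T.card : ℝ) * ((N:ℝ) * (1/(k:ℝ) - 1/(R:ℝ))) * 2
          = ((T.card : ℝ) * 2) * ((N:ℝ) * (1/(k:ℝ) - 1/(R:ℝ))) by ring, hcard]
        ring
      rw [h1]
      apply mul_le_mul_of_nonneg_left _ (Nat.cast_nonneg N)
      have hexpand : ((R:ℝ) * ((R:ℝ)+1)) * (1/(k:ℝ) - 1/(R:ℝ))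
          = (R:ℝ)*((R:ℝ)+1)/(k:ℝ) - ((R:ℝ)+1) := by
        field_simp
      rw [hexpand]
      have hfrac : (R:ℝ)*((R:ℝ)+1)/(k:ℝ) ≤ ((R:ℝ)+1)^2/(k:ℝ) := by
        gcongr
        nlinarith
      linarith
    nlinarith [hkey, step2]
  obtain ⟨p, hpT, hple⟩ := Finset.exists_le_of_sum_le hTne hsum_le
  have hp1 : p.1 < R := by
    simp only [hT, Finset.mem_sigma, Finset.mem_range] at hpT
    exact hpT.1
  exact ⟨p.1 + 1, by omega, by omega, hple⟩




noncomputable def avg (x : ℕ → ℕ) (r N : ℕ) : ℝ :=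
  (∑ n ∈ Finset.range N, (if x n = x (n + r) then (0 : ℝ) else 1)) / N

lemma avg_nonneg (x : ℕ → ℕ) (r N : ℕ) : 0 ≤ avg x r N := by
  apply div_nonneg _ (Nat.cast_nonneg N)
  exact Finset.sum_nonneg fun _ _ => by split_ifs <;> norm_num

lemma avg_le_one (x : ℕ → ℕ) (r N : ℕ) : avg x r N ≤ 1 := by
  rcases Nat.eq_zero_or_pos N with h | h
  · simp [avg, h]
  · rw [avg, div_le_one (by exact_mod_cast h)]
    calc ∑ n ∈ Finset.range N, (if x n = x (n + r) then (0 : ℝ) else 1)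
        ≤ ∑ n ∈ Finset.range N, (1:ℝ) :=
          Finset.sum_le_sum fun _ _ => by split_ifs <;> norm_num
      _ = N := by simp

lemma sum_delta (x : ℕ → ℕ) (r N : ℕ) :
    ∑ n ∈ Finset.range N, (if x n = x (n + r) then (0 : ℝ) else 1) = (N:ℝ) - E x r N := by
  have : ∀ n ∈ Finset.range N, (if x n = x (n + r) then (0 : ℝ) else 1)
      = 1 - (if x n = x (n + r) then (1:ℝ) else 0) := by
    intro n _; split_ifs <;> norm_num
  rw [Finset.sum_congr rfl this, Finset.sum_sub_distrib]
  simp [E]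

lemma liminf_avg_nonneg (x : ℕ → ℕ) (r : ℕ) : 0 ≤ Filter.liminf (avg x r) Filter.atTop := by
  apply Filter.le_liminf_of_le
  · exact Filter.isCoboundedUnder_ge_of_le Filter.atTop (x := 1) (avg_le_one x r)
  · exact Filter.Eventually.of_forall (avg_nonneg x r)

theorem liminf_autocorrelation_le'
    (hk : 0 < k) (hx : ∀ n, x n < k) :
    Filter.liminf (fun r : ℕ => Filter.liminf (avg x r) Filter.atTop) Filter.atTop
      ≤ 1 - 1 / (k : ℝ) := by
  have hkpos : (0:ℝ) < k := by exact_mod_cast hk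
  apply le_of_forall_pos_le_add
  intro ε hε
  -- choose R
  set R : ℕ := max 1 ⌈2/ε⌉₊ with hRdef
  have hR1 : 1 ≤ R := le_max_left _ _
  have hRpos : (0:ℝ) < R := by exact_mod_cast hR1
  have hR2 : 2/(R:ℝ) ≤ ε := by
    rw [div_le_iff₀ hRpos]
    have h1 : 2/ε ≤ (⌈2/ε⌉₊ : ℝ) := Nat.le_ceil _
    have h2 : ((⌈2/ε⌉₊ : ℕ) : ℝ) ≤ (R:ℝ) := by exact_mod_cast le_max_right 1 ⌈2/ε⌉₊
    have := h1.trans h2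
    rw [div_le_iff₀ hε] at this
    linarith [this]
  apply Filter.liminf_le_of_frequently_le _ ⟨0, Filter.eventually_map.2
    (Filter.Eventually.of_forall fun r => liminf_avg_nonneg x r)⟩
  rw [Filter.frequently_atTop]
  intro M
  -- pigeonhole over d
  have hper : ∀ N : ℕ, ∃ d ∈ Finset.Icc 1 R,
      (N:ℝ) * (1/(k:ℝ) - 1/(R:ℝ)) - (R:ℝ)*(M:ℝ) ≤ E x (d*M) N := by
    intro N
    obtain ⟨d, h1, h2, h3⟩ := main_est hk hx M R N hR1
    exact ⟨d, Finset.mem_Icc.2 ⟨h1, h2⟩, h3⟩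
  have hfreq : ∃ d ∈ Finset.Icc 1 R, ∃ᶠ N : ℕ in Filter.atTop,
      (N:ℝ) * (1/(k:ℝ) - 1/(R:ℝ)) - (R:ℝ)*(M:ℝ) ≤ E x (d*M) N := by
    by_contra hcon
    push_neg at hcon
    have hev : ∀ᶠ N : ℕ in Filter.atTop, ∀ d ∈ Finset.Icc 1 R,
        ¬ ((N:ℝ) * (1/(k:ℝ) - 1/(R:ℝ)) - (R:ℝ)*(M:ℝ) ≤ E x (d*M) N) := by
      rw [Filter.eventually_all_finset]
      intro d hd
      exact (Filter.not_frequently.1 (by simpa [lt_sub_iff_add_lt] using hcon d hd))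
    obtain ⟨N, hN⟩ := hev.exists
    obtain ⟨d, hd, hle⟩ := hper N
    exact hN d hd hle
  obtain ⟨d, hd, hfr⟩ := hfreq
  obtain ⟨hd1, hd2⟩ := Finset.mem_Icc.1 hd
  refine ⟨d*M, Nat.le_mul_of_pos_left M (by omega), ?_⟩
  -- show liminf (avg x (d*M)) ≤ 1 - 1/k + ε
  apply Filter.liminf_le_of_frequently_le _ ⟨0, Filter.eventually_map.2
    (Filter.Eventually.of_forall fun N => avg_nonneg x (d*M) N)⟩
  have hfr2 := hfr.and_eventually (Filter.eventually_ge_atTop (max 1 (R^2*M)))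
  apply hfr2.mono
  rintro N ⟨hE, hN⟩
  have hN1 : 1 ≤ N := le_trans (le_max_left _ _) hN
  have hN2 : R^2*M ≤ N := le_trans (le_max_right _ _) hN
  have hNpos : (0:ℝ) < N := by exact_mod_cast hN1
  rw [avg, sum_delta, div_le_iff₀ hNpos]
  -- need: N - E ≤ (1 - 1/k + ε) * N
  have h1 : (R:ℝ)*(M:ℝ) ≤ (N:ℝ)/(R:ℝ) := by
    rw [le_div_iff₀ hRpos]
    have : ((R^2*M : ℕ):ℝ) ≤ (N:ℝ) := by exact_mod_cast hN2
    push_cast at this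
    nlinarith [this]
  have h2 : (N:ℝ)*(2/(R:ℝ)) ≤ (N:ℝ)*ε := mul_le_mul_of_nonneg_left hR2 (le_of_lt hNpos)
  have h3 : (N:ℝ) * (1/(k:ℝ) - 1/(R:ℝ)) = (N:ℝ)/(k:ℝ) - (N:ℝ)/(R:ℝ) := by ring
  have h4 : (N:ℝ)*(2/(R:ℝ)) = 2*((N:ℝ)/(R:ℝ)) := by ring
  have h5 : (1 - 1/(k:ℝ) + ε) * (N:ℝ) = (N:ℝ) - (N:ℝ)/(k:ℝ) + (N:ℝ)*ε := by ring
  rw [h5]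
  rw [h3] at hE
  linarith

end AutoCorrAux

/-- For any infinite word over an alphabet of size `k`,
`liminf_{r → ∞} C_{(0,r)} ≤ 1 - 1/k`. -/
theorem liminf_autocorrelation_le
    (k : ℕ) (hk : 0 < k) (x : ℕ → ℕ) (hx : ∀ n, x n < k) :
    Filter.liminf (fun r : ℕ =>
        Filter.liminf (fun N : ℕ =>
          (∑ n ∈ Finset.range N, (if x n = x (n + r) then (0 : ℝ) else 1)) / N)
          Filter.atTop) Filter.atTop
      ≤ 1 - 1 / (k : ℝ) := by
  exact AutoCorrAux.liminf_autocorrelation_le' hk hx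
end

section
/- Let x be an infinite word over an alphabet of size k and let m ≥ 2. Then for any norm ‖·‖ on ℝ^m, lim_{λ→∞} ( inf { C_r : r ∈ ℕ^m, r normalized, ‖r‖ ≥ λ } ) ≤ 1 − 1/k^{m−1}. (Equivalently: for every ε > 0 and every λ there exists a normalized r ∈ ℕ^m with ‖r‖ ≥ λ and C_r ≤ 1 − 1/k^{m−1} + ε.) -/
open Filter Finset


lemma nrm_sum_le {m : ℕ} (nrm : (Fin m → ℝ) → ℝ)
    (nrm_add : ∀ a b, nrm (a + b) ≤ nrm a + nrm b)
    (nrm_zero : nrm 0 = 0)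
    {ι : Type*} (s : Finset ι) (f : ι → (Fin m → ℝ)) :
    nrm (∑ i ∈ s, f i) ≤ ∑ i ∈ s, nrm (f i) := by
  induction s using Finset.cons_induction with
  | empty => simp [nrm_zero]
  | cons a s ha ih =>
    rw [Finset.sum_cons, Finset.sum_cons]
    exact (nrm_add _ _).trans (by linarith)

lemma norm_lower {m : ℕ} (hm : 0 < m) (nrm : (Fin m → ℝ) → ℝ)
    (nrm_add : ∀ a b, nrm (a + b) ≤ nrm a + nrm b)
    (nrm_smul : ∀ (c : ℝ) (a), nrm (c • a) = |c| * nrm a)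
    (nrm_eq_zero : ∀ a, nrm a = 0 ↔ a = 0) :
    ∃ c > 0, ∀ v : Fin m → ℝ, c * ‖v‖ ≤ nrm v := by
  have nrm_zero : nrm 0 = 0 := (nrm_eq_zero 0).2 rfl
  have nrm_neg : ∀ a, nrm (-a) = nrm a := by
    intro a
    have := nrm_smul (-1) a
    simpa using this
  have nrm_nonneg : ∀ a, 0 ≤ nrm a := by
    intro a
    have h := nrm_add a (-a)
    rw [add_neg_cancel, nrm_zero, nrm_neg] at h
    linarith
  -- Lipschitz bound
  set C0 : ℝ := ∑ i : Fin m, nrm (fun j => if i = j then 1 else 0) with hC0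
  have hle : ∀ a : Fin m → ℝ, nrm a ≤ C0 * ‖a‖ := by
    intro a
    have ha : a = ∑ i : Fin m, a i • fun j => if i = j then (1:ℝ) else 0 := pi_eq_sum_univ a
    calc nrm a = nrm (∑ i : Fin m, a i • fun j => if i = j then (1:ℝ) else 0) := by rw [← ha]
      _ ≤ ∑ i : Fin m, nrm (a i • fun j => if i = j then (1:ℝ) else 0) :=
          nrm_sum_le nrm nrm_add nrm_zero _ _
      _ = ∑ i : Fin m, |a i| * nrm (fun j => if i = j then (1:ℝ) else 0) := by
          simp [nrm_smul]
      _ ≤ ∑ i : Fin m, ‖a‖ * nrm (fun j => if i = j then (1:ℝ) else 0) := by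
          apply Finset.sum_le_sum
          intro i _
          exact mul_le_mul_of_nonneg_right (by simpa using norm_le_pi_norm a i) (nrm_nonneg _)
      _ = C0 * ‖a‖ := by rw [hC0, Finset.sum_mul]; simp [mul_comm]
  have hcont : Continuous nrm := by
    have : LipschitzWith (Real.toNNReal C0) nrm := by
      apply LipschitzWith.of_dist_le_mul
      intro a b
      have h1 : nrm a - nrm b ≤ nrm (a - b) := by
        have := nrm_add (a - b) b; simpa using this
      have h2 : nrm b - nrm a ≤ nrm (a - b) := by
        have := nrm_add (b - a) a
        rw [sub_add_cancel] at this
        have hn : nrm (b - a) = nrm (a - b) := by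
          rw [← nrm_neg (a - b)]; congr 1; abel
        linarith [hn ▸ this]
      have habs : |nrm a - nrm b| ≤ nrm (a - b) := abs_sub_le_iff.2 ⟨h1, h2⟩
      calc dist (nrm a) (nrm b) = |nrm a - nrm b| := Real.dist_eq _ _
        _ ≤ nrm (a - b) := habs
        _ ≤ C0 * ‖a - b‖ := hle _
        _ ≤ (Real.toNNReal C0) * dist a b := by
            rw [dist_eq_norm]
            apply mul_le_mul_of_nonneg_right _ (norm_nonneg _)
            exact le_max_left _ _
    exact this.continuous
  -- sphere
  have hsph : IsCompact (Metric.sphere (0 : Fin m → ℝ) 1) := isCompact_sphere _ _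
  have hne : (Metric.sphere (0 : Fin m → ℝ) 1).Nonempty := by
    refine ⟨Pi.single (⟨0, hm⟩ : Fin m) (1:ℝ), ?_⟩
    simp only [Metric.mem_sphere, dist_zero_right]
    rw [Pi.norm_single]
    simp
  obtain ⟨v0, hv0mem, hv0min⟩ := hsph.exists_isMinOn hne hcont.continuousOn
  have hv0norm : ‖v0‖ = 1 := by simpa [dist_zero_right] using hv0mem
  have hc : 0 < nrm v0 := by
    rcases (nrm_nonneg v0).lt_or_eq with h | h
    · exact h
    · exfalso
      have : v0 = 0 := (nrm_eq_zero v0).1 h.symm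
      rw [this] at hv0norm; simp at hv0norm
  refine ⟨nrm v0, hc, fun v => ?_⟩
  rcases eq_or_ne v 0 with rfl | hv
  · simp [nrm_zero]
  · have hnv : (0:ℝ) < ‖v‖ := norm_pos_iff.2 hv
    have hu : (‖v‖⁻¹ • v) ∈ Metric.sphere (0 : Fin m → ℝ) 1 := by
      simp [norm_smul, abs_of_pos (inv_pos.2 hnv), inv_mul_cancel₀ hnv.ne']
    have hmin2 : nrm v0 ≤ nrm (‖v‖⁻¹ • v) := hv0min hu
    have heq : nrm (‖v‖⁻¹ • v) = ‖v‖⁻¹ * nrm v := by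
      rw [nrm_smul, abs_of_pos (inv_pos.2 hnv)]
    rw [heq] at hmin2
    calc nrm v0 * ‖v‖ ≤ (‖v‖⁻¹ * nrm v) * ‖v‖ := by
          apply mul_le_mul_of_nonneg_right hmin2 hnv.le
      _ = nrm v := by field_simp


lemma desc_pow (c m : ℕ) : (c + 1 - m)^m ≤ Nat.descFactorial c m := by
  induction m with
  | zero => simp
  | succ n ih =>
    have h1 : c + 1 - (n+1) = c - n := by omega
    rw [Nat.descFactorial_succ, h1, pow_succ, mul_comm]
    apply Nat.mul_le_mul_left
    calc (c - n)^n ≤ (c + 1 - n)^n := Nat.pow_le_pow_left (by omega) n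
      _ ≤ Nat.descFactorial c n := ih

lemma window_bound (k m : ℕ) (hk : 0 < k) (hm : 2 ≤ m) (x : ℕ → ℕ) (hx : ∀ n, x n < k)
    (t L : ℕ) (hL : k * (m-1) ≤ L) :
    ((L : ℝ) - k*(m-1))^m / (k^(m-1) * m.factorial) ≤
      #((Finset.powersetCard m (Finset.Ico t (t+L))).filter
        (fun S => ∀ u ∈ S, ∀ v ∈ S, x u = x v)) := by
  set W := Finset.Ico t (t+L) with hW
  have hWcard : #W = L := by rw [hW, Nat.card_Ico]; omega
  set C : ℕ → Finset ℕ := fun a => W.filter (fun u => x u = a) with hC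
  have hsumcard : ∑ a ∈ Finset.range k, #(C a) = L := by
    rw [← hWcard]
    exact (Finset.card_eq_sum_card_fiberwise (fun u _ => Finset.mem_range.2 (hx u))).symm
  -- biUnion of monochromatic subsets
  have hsub : (Finset.range k).biUnion (fun a => Finset.powersetCard m (C a)) ⊆
      (Finset.powersetCard m W).filter (fun S => ∀ u ∈ S, ∀ v ∈ S, x u = x v) := by
    intro S hS
    rw [Finset.mem_biUnion] at hS
    obtain ⟨a, _, hSa⟩ := hS
    rw [Finset.mem_powersetCard] at hSa
    rw [Finset.mem_filter, Finset.mem_powersetCard]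
    refine ⟨⟨hSa.1.trans (Finset.filter_subset _ _), hSa.2⟩, ?_⟩
    intro u hu v hv
    have h1 := (Finset.mem_filter.1 (hSa.1 hu)).2
    have h2 := (Finset.mem_filter.1 (hSa.1 hv)).2
    rw [h1, h2]
  have hdisj : ∀ a ∈ Finset.range k, ∀ b ∈ Finset.range k, a ≠ b →
      Disjoint (Finset.powersetCard m (C a)) (Finset.powersetCard m (C b)) := by
    intro a _ b _ hab
    rw [Finset.disjoint_left]
    intro S hSa hSb
    rw [Finset.mem_powersetCard] at hSa hSb
    have hne : S.Nonempty := Finset.card_pos.1 (by omega)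
    obtain ⟨u, hu⟩ := hne
    have h1 := (Finset.mem_filter.1 (hSa.1 hu)).2
    have h2 := (Finset.mem_filter.1 (hSb.1 hu)).2
    exact hab (h1 ▸ h2 ▸ rfl)
  have hcard : ∑ a ∈ Finset.range k, (#(C a)).choose m ≤
      #((Finset.powersetCard m W).filter (fun S => ∀ u ∈ S, ∀ v ∈ S, x u = x v)) := by
    have e1 : #((Finset.range k).biUnion (fun a => Finset.powersetCard m (C a)))
        = ∑ a ∈ Finset.range k, (#(C a)).choose m := by
      rw [Finset.card_biUnion hdisj]
      simp [Finset.card_powersetCard]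
    rw [← e1]
    exact Finset.card_le_card hsub
  -- now the real-number estimate
  set f : ℕ → ℝ := fun a => ((#(C a) + 1 - m : ℕ) : ℝ) with hf
  have hfnonneg : ∀ a ∈ Finset.range k, (0:ℝ) ≤ f a := fun a _ => Nat.cast_nonneg _
  obtain ⟨m', rfl⟩ : ∃ m', m = m' + 1 := ⟨m - 1, by omega⟩
  have hjens := pow_sum_div_card_le_sum_pow hfnonneg m' (f := f)
  rw [Finset.card_range] at hjens
  have hsumf : (L:ℝ) - k * m' ≤ ∑ a ∈ Finset.range k, f a := by
    have : ∀ a ∈ Finset.range k, ((#(C a)):ℝ) - m' ≤ f a := by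
      intro a _
      show ((#(C a)):ℝ) - m' ≤ ((#(C a) + 1 - (m'+1) : ℕ):ℝ)
      rcases le_or_gt m' (#(C a)) with h | h
      · have e : #(C a) + 1 - (m'+1) = #(C a) - m' := by omega
        rw [e, Nat.cast_sub h]
      · have h2 : ((#(C a)):ℝ) < m' := by exact_mod_cast h
        have h0 : (0:ℝ) ≤ ((#(C a) + 1 - (m'+1) : ℕ):ℝ) := Nat.cast_nonneg _
        linarith
    calc (L:ℝ) - k * m' = ∑ a ∈ Finset.range k, (((#(C a)):ℝ) - m') := by
          rw [Finset.sum_sub_distrib, Finset.sum_const, Finset.card_range]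
          have : (∑ a ∈ Finset.range k, ((#(C a)):ℝ)) = (L:ℝ) := by
            rw [← Nat.cast_sum, hsumcard]
          rw [this]; ring
      _ ≤ ∑ a ∈ Finset.range k, f a := Finset.sum_le_sum this
  have hLk : (0:ℝ) ≤ (L:ℝ) - k * m' := by
    have : (k * m' : ℕ) ≤ L := by simpa using hL
    have := Nat.cast_le (α := ℝ).2 this
    push_cast at this
    linarith
  have hpow : ((L:ℝ) - k * m')^(m'+1) ≤ (∑ a ∈ Finset.range k, f a)^(m'+1) :=
    pow_le_pow_left₀ hLk hsumf _
  have hterm : ∀ a ∈ Finset.range k, f a ^ (m'+1) ≤ ((m'+1).factorial : ℝ) * ((#(C a)).choose (m'+1) : ℝ) := by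
    intro a _
    rw [hf]
    have h1 : (#(C a) + 1 - (m'+1))^(m'+1) ≤ Nat.descFactorial (#(C a)) (m'+1) := desc_pow _ _
    rw [Nat.descFactorial_eq_factorial_mul_choose] at h1
    have := Nat.cast_le (α := ℝ).2 h1
    push_cast at this ⊢
    convert this using 2
  have hfinal : ((L:ℝ) - k * m')^(m'+1) / ((k:ℝ)^m' * ((m'+1).factorial)) ≤
      ∑ a ∈ Finset.range k, ((#(C a)).choose (m'+1) : ℝ) := by
    have hk' : (0:ℝ) < (k:ℝ)^m' := by positivity
    have hfact : (0:ℝ) < ((m'+1).factorial : ℝ) := by positivity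
    rw [div_le_iff₀ (by positivity)]
    have h2 : (∑ a ∈ Finset.range k, f a)^(m'+1) ≤ (k:ℝ)^m' * ∑ a ∈ Finset.range k, f a ^(m'+1) := by
      rw [div_le_iff₀ hk'] at hjens
      calc (∑ a ∈ Finset.range k, f a)^(m'+1)
          ≤ (∑ a ∈ Finset.range k, f a ^(m'+1)) * (k:ℝ)^m' := hjens
        _ = (k:ℝ)^m' * ∑ a ∈ Finset.range k, f a ^(m'+1) := mul_comm _ _
    have h3 : ∑ a ∈ Finset.range k, f a ^(m'+1) ≤ ((m'+1).factorial : ℝ) * ∑ a ∈ Finset.range k, ((#(C a)).choose (m'+1) : ℝ) := by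
      rw [Finset.mul_sum]
      exact Finset.sum_le_sum hterm
    calc ((L:ℝ) - k * m')^(m'+1) ≤ (∑ a ∈ Finset.range k, f a)^(m'+1) := hpow
      _ ≤ (k:ℝ)^m' * ∑ a ∈ Finset.range k, f a ^(m'+1) := h2
      _ ≤ (k:ℝ)^m' * (((m'+1).factorial : ℝ) * ∑ a ∈ Finset.range k, ((#(C a)).choose (m'+1) : ℝ)) := by
          apply mul_le_mul_of_nonneg_left h3 hk'.le
      _ = (∑ a ∈ Finset.range k, ((#(C a)).choose (m'+1) : ℝ)) * ((k:ℝ)^m' * ((m'+1).factorial)) := by ring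
  have hcast : (∑ a ∈ Finset.range k, ((#(C a)).choose (m'+1) : ℝ)) ≤
      (#((Finset.powersetCard (m'+1) W).filter (fun S => ∀ u ∈ S, ∀ v ∈ S, x u = x v)) : ℝ) := by
    rw [← Nat.cast_sum]
    exact_mod_cast hcard
  refine le_trans (le_of_eq ?_) (hfinal.trans hcast)
  have e : (m' + 1 - 1) = m' := by omega
  rw [e]
  push_cast
  ring_nf


/-- min of a finset of naturals, 0 if empty -/
def fmin (S : Finset ℕ) : ℕ := if h : S.Nonempty then S.min' h else 0

lemma fmin_mem {S : Finset ℕ} (h : S.Nonempty) : fmin S ∈ S := by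
  rw [fmin, dif_pos h]; exact S.min'_mem h

lemma fmin_le {S : Finset ℕ} (h : S.Nonempty) {u : ℕ} (hu : u ∈ S) : fmin S ≤ u := by
  rw [fmin, dif_pos h]; exact S.min'_le u hu

lemma sup_id_mem {S : Finset ℕ} (h : S.Nonempty) : S.sup id ∈ S := by
  have : S.max' h = S.sup id := by
    rw [Finset.max'_eq_sup', Finset.sup'_eq_sup]
  rw [← this]; exact S.max'_mem h

lemma le_sup_id {S : Finset ℕ} {u : ℕ} (hu : u ∈ S) : u ≤ S.sup id :=
  Finset.le_sup (f := id) hu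

lemma shape_card {S : Finset ℕ} (c : ℕ) (hc : ∀ u ∈ S, c ≤ u) :
    #(S.image (· - c)) = #S := by
  apply Finset.card_image_of_injOn
  intro u hu v hv huv
  have := hc u hu; have := hc v hv
  simp only at huv
  omega

lemma shape_unshift {S : Finset ℕ} (c : ℕ) (hc : ∀ u ∈ S, c ≤ u) :
    (S.image (· - c)).image (· + c) = S := by
  rw [Finset.image_image]
  rw [show ((· + c) ∘ (· - c)) = fun u => u - c + c from rfl]
  have : ∀ u ∈ S, u - c + c = u := fun u hu => by have := hc u hu; omega
  calc S.image (fun u => u - c + c) = S.image id := Finset.image_congr (fun u hu => this u hu)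
    _ = S := Finset.image_id

lemma shape_shift {S : Finset ℕ} (c : ℕ) :
    (S.image (· + c)).image (· - c) = S := by
  rw [Finset.image_image]
  rw [show ((· - c) ∘ (· + c)) = fun u => u + c - c from rfl]
  have : (fun (u:ℕ) => u + c - c) = id := by funext u; simp
  rw [this, Finset.image_id]

lemma shape_sup {S : Finset ℕ} (hne : S.Nonempty) (c : ℕ) (hc : ∀ u ∈ S, c ≤ u) :
    (S.image (· - c)).sup id = S.sup id - c := by
  apply le_antisymm
  · apply Finset.sup_le
    intro b hb
    rw [Finset.mem_image] at hb
    obtain ⟨u, hu, rfl⟩ := hb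
    have := le_sup_id hu
    simp only [id]
    omega
  · have hmem : S.sup id - c ∈ S.image (· - c) :=
      Finset.mem_image_of_mem _ (sup_id_mem hne)
    exact le_sup_id hmem

/-- Double counting: pairs (window, monochromatic big-diameter subset) inject into
(shape, start, offset) triples. -/
lemma count_le (x : ℕ → ℕ) (m T L N : ℕ) (hm : 1 ≤ m) (hN : L ≤ N) (hL : 1 ≤ L) :
    #((Finset.range (N - L + 1)).sigma (fun t =>
        (Finset.powersetCard m (Finset.Ico t (t+L))).filter
          (fun S => (∀ u ∈ S, ∀ v ∈ S, x u = x v) ∧ ∃ u ∈ S, ∃ v ∈ S, T + v ≤ u)))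
    ≤ ∑ S₀ ∈ ((Finset.powersetCard m (Finset.range L)).filter
          (fun S₀ => 0 ∈ S₀ ∧ ∃ u ∈ S₀, ∃ v ∈ S₀, T + v ≤ u)),
        (#((Finset.range N).filter (fun n => ∀ u ∈ S₀, ∀ v ∈ S₀, x (n+u) = x (n+v))))
          * (L - S₀.sup id) := by
  set Sh := (Finset.powersetCard m (Finset.range L)).filter
      (fun S₀ => 0 ∈ S₀ ∧ ∃ u ∈ S₀, ∃ v ∈ S₀, T + v ≤ u) with hSh
  have hrhs : ∑ S₀ ∈ Sh,
      (#((Finset.range N).filter (fun n => ∀ u ∈ S₀, ∀ v ∈ S₀, x (n+u) = x (n+v))))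
        * (L - S₀.sup id)
      = #(Sh.sigma (fun S₀ =>
          ((Finset.range N).filter (fun n => ∀ u ∈ S₀, ∀ v ∈ S₀, x (n+u) = x (n+v)))
            ×ˢ (Finset.range (L - S₀.sup id)))) := by
    rw [Finset.card_sigma]
    congr 1
    funext S₀
    rw [Finset.card_product, Finset.card_range]
  rw [hrhs]
  apply Finset.card_le_card_of_injOn
    (fun p => ⟨p.2.image (· - fmin p.2), (fmin p.2, fmin p.2 - p.1)⟩)
  · -- maps to
    rintro ⟨t, S⟩ hp
    replace hp : t ∈ Finset.range (N - L + 1) ∧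
        S ∈ (Finset.powersetCard m (Finset.Ico t (t+L))).filter
          (fun S => (∀ u ∈ S, ∀ v ∈ S, x u = x v) ∧ ∃ u ∈ S, ∃ v ∈ S, T + v ≤ u) :=
      Finset.mem_sigma.1 hp
    rw [Finset.mem_range, Finset.mem_filter, Finset.mem_powersetCard] at hp
    obtain ⟨ht, ⟨hSsub, hScard⟩, hmono, u₀, hu₀, v₀, hv₀, hbig⟩ := hp
    have hne : S.Nonempty := Finset.card_pos.1 (by omega)
    have hlow : ∀ u ∈ S, t ≤ u := fun u hu => (Finset.mem_Ico.1 (hSsub hu)).1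
    have hhigh : ∀ u ∈ S, u < t + L := fun u hu => (Finset.mem_Ico.1 (hSsub hu)).2
    have hminmem := fmin_mem hne
    have hminlow : t ≤ fmin S := hlow _ hminmem
    have hminhigh : fmin S < t + L := hhigh _ hminmem
    have hshape_low : ∀ u ∈ S, fmin S ≤ u := fun u hu => fmin_le hne hu
    show (⟨S.image (· - fmin S), (fmin S, fmin S - t)⟩ : (_ : Finset ℕ) × ℕ × ℕ) ∈ _
    rw [Finset.mem_coe, Finset.mem_sigma]
    constructor
    · -- shape ∈ Sh
      rw [hSh, Finset.mem_filter, Finset.mem_powersetCard]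
      refine ⟨⟨?_, ?_⟩, ?_, ?_⟩
      · intro b hb
        rw [Finset.mem_image] at hb
        obtain ⟨u, hu, rfl⟩ := hb
        rw [Finset.mem_range]
        have h1 := hhigh u hu
        have h2 := hshape_low u hu
        omega
      · rw [shape_card (fmin S) hshape_low, hScard]
      · have h0 : (0:ℕ) = fmin S - fmin S := by omega
        rw [h0]
        exact Finset.mem_image_of_mem _ hminmem
      · refine ⟨u₀ - fmin S, Finset.mem_image_of_mem _ hu₀, v₀ - fmin S,
          Finset.mem_image_of_mem _ hv₀, ?_⟩
        have h1 := hshape_low v₀ hv₀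
        have h2 := hshape_low u₀ hu₀
        omega
    · -- (fmin S, fmin S - t) in product
      show ((fmin S, fmin S - t) : ℕ × ℕ) ∈
        ((Finset.range N).filter (fun n => ∀ u ∈ S.image (· - fmin S),
            ∀ v ∈ S.image (· - fmin S), x (n+u) = x (n+v)))
          ×ˢ (Finset.range (L - (S.image (· - fmin S)).sup id))
      simp only [Finset.mem_product, Finset.mem_filter, Finset.mem_range]
      refine ⟨⟨by omega, ?_⟩, ?_⟩
      swap
      · rw [shape_sup hne (fmin S) hshape_low]
        have hsupmem := sup_id_mem hne
        have h1 := hhigh _ hsupmem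
        have h2 := hshape_low _ hsupmem
        omega
      · intro u hu v hv
        rw [Finset.mem_image] at hu hv
        obtain ⟨u', hu', rfl⟩ := hu
        obtain ⟨v', hv', rfl⟩ := hv
        have h1 : fmin S + (u' - fmin S) = u' := by have := hshape_low u' hu'; omega
        have h2 : fmin S + (v' - fmin S) = v' := by have := hshape_low v' hv'; omega
        rw [h1, h2]
        exact hmono u' hu' v' hv'
  · -- injective
    rintro ⟨t, S⟩ hp ⟨t', S'⟩ hp' heq
    rw [Finset.mem_coe] at hp hp'
    replace hp : t ∈ Finset.range (N - L + 1) ∧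
        S ∈ (Finset.powersetCard m (Finset.Ico t (t+L))).filter
          (fun S => (∀ u ∈ S, ∀ v ∈ S, x u = x v) ∧ ∃ u ∈ S, ∃ v ∈ S, T + v ≤ u) :=
      Finset.mem_sigma.1 hp
    replace hp' : t' ∈ Finset.range (N - L + 1) ∧
        S' ∈ (Finset.powersetCard m (Finset.Ico t' (t'+L))).filter
          (fun S => (∀ u ∈ S, ∀ v ∈ S, x u = x v) ∧ ∃ u ∈ S, ∃ v ∈ S, T + v ≤ u) :=
      Finset.mem_sigma.1 hp'
    rw [Finset.mem_filter, Finset.mem_powersetCard] at hp hp'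
    have hcardS : #S = m := hp.2.1.2
    have hcardS' : #S' = m := hp'.2.1.2
    have hne : S.Nonempty := Finset.card_pos.1 (by omega)
    have hne' : S'.Nonempty := Finset.card_pos.1 (by omega)
    have hlow : ∀ u ∈ S, fmin S ≤ u := fun u hu => fmin_le hne hu
    have hlow' : ∀ u ∈ S', fmin S' ≤ u := fun u hu => fmin_le hne' hu
    replace heq : (⟨S.image (· - fmin S), (fmin S, fmin S - t)⟩ : (_ : Finset ℕ) × ℕ × ℕ)
        = ⟨S'.image (· - fmin S'), (fmin S', fmin S' - t')⟩ := heq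
    rw [Sigma.mk.inj_iff] at heq
    obtain ⟨hsh, hrest⟩ := heq
    have hrest' : (fmin S, fmin S - t) = (fmin S', fmin S' - t') := eq_of_heq hrest
    have hmin : fmin S = fmin S' := congrArg Prod.fst hrest'
    have hoff : fmin S - t = fmin S' - t' := congrArg Prod.snd hrest'
    have hSeq : S = S' := by
      have e1 := shape_unshift (fmin S) hlow
      have e2 := shape_unshift (fmin S') hlow'
      rw [← e1, ← e2, hsh, hmin]
    have hteq : t = t' := by
      have h1 : t ≤ fmin S := (Finset.mem_Ico.1 (hp.2.1.1 (fmin_mem hne))).1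
      have h2 : t' ≤ fmin S' := (Finset.mem_Ico.1 (hp'.2.1.1 (fmin_mem hne'))).1
      omega
    rw [hSeq, hteq]

/-- Total weight of shapes is at most the number of m-subsets of the window. -/
lemma weight_sum_le (m L : ℕ) (hm : 1 ≤ m) (p : Finset ℕ → Prop) [DecidablePred p] :
    ∑ S₀ ∈ ((Finset.powersetCard m (Finset.range L)).filter
        (fun S₀ => 0 ∈ S₀ ∧ p S₀)), (L - S₀.sup id) ≤ Nat.choose L m := by
  have key : ∀ (q : Finset ℕ → Prop) [DecidablePred q],
      (∀ S₀, q S₀ → 0 ∈ S₀) →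
      ∑ S₀ ∈ ((Finset.powersetCard m (Finset.range L)).filter q), (L - S₀.sup id)
        ≤ Nat.choose L m := by
    intro q _ hq
    have hright : Nat.choose L m = #(Finset.powersetCard m (Finset.range L)) := by
      rw [Finset.card_powersetCard, Finset.card_range]
    rw [hright]
    have hsig : ∑ S₀ ∈ ((Finset.powersetCard m (Finset.range L)).filter q), (L - S₀.sup id)
        = #((((Finset.powersetCard m (Finset.range L)).filter q)).sigma
            (fun S₀ => Finset.range (L - S₀.sup id))) := by
      rw [Finset.card_sigma]
      congr 1
      funext S₀
      rw [Finset.card_range]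
    rw [hsig]
    apply Finset.card_le_card_of_injOn (fun q => q.1.image (· + q.2))
    · rintro ⟨S₀, c⟩ hp
      replace hp : S₀ ∈ (Finset.powersetCard m (Finset.range L)).filter q ∧
          c ∈ Finset.range (L - S₀.sup id) := Finset.mem_sigma.1 hp
      rw [Finset.mem_filter, Finset.mem_powersetCard] at hp
      obtain ⟨⟨⟨hsub, hcard⟩, hq0⟩, hc⟩ := hp
      rw [Finset.mem_range] at hc
      show S₀.image (· + c) ∈ _
      rw [Finset.mem_coe, Finset.mem_powersetCard]
      constructor
      · intro b hb
        rw [Finset.mem_image] at hb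
        obtain ⟨u, hu, rfl⟩ := hb
        rw [Finset.mem_range]
        have := le_sup_id hu
        omega
      · rw [Finset.card_image_of_injOn, hcard]
        intro u _ v _ h
        simpa using h
    · rintro ⟨S₀, c⟩ hp ⟨S₀', c'⟩ hp' heq
      rw [Finset.mem_coe] at hp hp'
      replace hp : S₀ ∈ (Finset.powersetCard m (Finset.range L)).filter q ∧
          c ∈ Finset.range (L - S₀.sup id) := Finset.mem_sigma.1 hp
      replace hp' : S₀' ∈ (Finset.powersetCard m (Finset.range L)).filter q ∧
          c' ∈ Finset.range (L - S₀'.sup id) := Finset.mem_sigma.1 hp'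
      rw [Finset.mem_filter, Finset.mem_powersetCard] at hp hp'
      have h0 : 0 ∈ S₀ := hq _ hp.1.2
      have h0' : 0 ∈ S₀' := hq _ hp'.1.2
      replace heq : S₀.image (· + c) = S₀'.image (· + c') := heq
      -- c is the min of the image
      have hminc : ∀ (A : Finset ℕ) (d : ℕ), 0 ∈ A → fmin (A.image (· + d)) = d := by
        intro A d h0A
        have hne : (A.image (· + d)).Nonempty := ⟨0 + d, Finset.mem_image_of_mem _ h0A⟩
        apply le_antisymm
        · exact fmin_le hne (by simpa using Finset.mem_image_of_mem (· + d) h0A)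
        · have := fmin_mem hne
          rw [Finset.mem_image] at this
          obtain ⟨u, _, hu2⟩ := this
          omega
      have hcc : c = c' := by
        have e1 := hminc S₀ c h0
        have e2 := hminc S₀' c' h0'
        rw [heq] at e1
        omega
      have hSS : S₀ = S₀' := by
        have e1 := shape_shift (S := S₀) c
        have e2 := shape_shift (S := S₀') c'
        rw [← e1, ← e2, heq, hcc]
      rw [hSS, hcc]
  exact key _ (fun S₀ h => h.1)

/-- Few small-diameter subsets in a window. -/
lemma small_diam_le (m T L t : ℕ) (hm : 1 ≤ m) :
    #((Finset.powersetCard m (Finset.Ico t (t+L))).filter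
        (fun S => ¬ ∃ u ∈ S, ∃ v ∈ S, T + v ≤ u)) ≤ L * Nat.choose T m := by
  calc #((Finset.powersetCard m (Finset.Ico t (t+L))).filter
        (fun S => ¬ ∃ u ∈ S, ∃ v ∈ S, T + v ≤ u))
      ≤ #((Finset.Ico t (t+L)).biUnion
          (fun u => Finset.powersetCard m (Finset.Ico u (u+T)))) := by
        apply Finset.card_le_card
        intro S hS
        rw [Finset.mem_filter, Finset.mem_powersetCard] at hS
        obtain ⟨⟨hsub, hcard⟩, hsmall⟩ := hS
        push_neg at hsmall
        have hne : S.Nonempty := Finset.card_pos.1 (by omega)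
        rw [Finset.mem_biUnion]
        refine ⟨fmin S, hsub (fmin_mem hne), ?_⟩
        rw [Finset.mem_powersetCard]
        refine ⟨?_, hcard⟩
        intro u hu
        rw [Finset.mem_Ico]
        have h1 := fmin_le hne hu
        have h2 := hsmall u hu (fmin S) (fmin_mem hne)
        omega
    _ ≤ ∑ u ∈ Finset.Ico t (t+L), #(Finset.powersetCard m (Finset.Ico u (u+T))) :=
        Finset.card_biUnion_le
    _ ≤ L * Nat.choose T m := by
        have : ∀ u ∈ Finset.Ico t (t+L), #(Finset.powersetCard m (Finset.Ico u (u+T)))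
            = Nat.choose T m := by
          intro u _
          rw [Finset.card_powersetCard, Nat.card_Ico]
          congr 1
          omega
        rw [Finset.sum_congr rfl this, Finset.sum_const, Nat.card_Ico, smul_eq_mul]
        apply Nat.mul_le_mul_right
        omega


lemma exists_L (k m : ℕ) (hk : 0 < k) (hm : 2 ≤ m) (T : ℕ) (ε : ℝ) (hε : 0 < ε)
    (hβ : 0 < 1/(k:ℝ)^(m-1) - ε) :
    ∃ L : ℕ, k*(m-1) ≤ L ∧ m ≤ L ∧ 1 ≤ L ∧
      ((1/(k:ℝ)^(m-1)) - ε/2) * (Nat.choose L m) + L * (Nat.choose T m)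
        ≤ ((L:ℝ) - k*(m-1))^m / ((k:ℝ)^(m-1) * m.factorial) := by
  set q : ℝ := 1/(k:ℝ)^(m-1) with hq
  have hq0 : 0 < q := by positivity
  set A0 : ℝ := (k:ℝ)*(m-1) with hA0
  set CT : ℝ := (Nat.choose T m : ℝ) with hCT
  set F : ℝ := (m.factorial : ℝ) with hF
  have hF0 : 0 < F := by positivity
  -- the limit function
  have h1 : Tendsto (fun L : ℕ => ((L:ℝ) - A0)/L) atTop (nhds 1) := by
    have : (fun L : ℕ => ((L:ℝ) - A0)/L) =ᶠ[atTop] (fun L : ℕ => 1 - A0/L) := by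
      filter_upwards [eventually_gt_atTop 0] with L hL
      have : (L:ℝ) ≠ 0 := Nat.cast_ne_zero.2 hL.ne'
      field_simp
    rw [tendsto_congr' this]
    have := (tendsto_const_div_atTop_nhds_zero_nat A0).const_sub 1
    simpa using this
  have h2 : Tendsto (fun L : ℕ => q * (((L:ℝ) - A0)/L)^m) atTop (nhds q) := by
    have := (h1.pow m).const_mul q
    simpa using this
  have h3 : Tendsto (fun L : ℕ => F * CT * (L:ℝ) / (L:ℝ)^m) atTop (nhds 0) := by
    have hnum : (fun L : ℕ => F * CT * (L:ℝ) / (L:ℝ)^m) =ᶠ[atTop]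
        (fun L : ℕ => F * CT * ((L:ℝ)^(m-1))⁻¹) := by
      filter_upwards [eventually_gt_atTop 0] with L hL
      have hL0 : (L:ℝ) ≠ 0 := Nat.cast_ne_zero.2 hL.ne'
      have : (L:ℝ)^m = (L:ℝ) * (L:ℝ)^(m-1) := by
        rw [← pow_succ']
        congr 1
        omega
      rw [this]
      field_simp
    rw [tendsto_congr' hnum]
    have hpow : Tendsto (fun L : ℕ => ((L:ℝ))^(m-1)) atTop atTop :=
      (tendsto_pow_atTop (by omega)).comp tendsto_natCast_atTop_atTop
    have h4 := hpow.inv_tendsto_atTop.const_mul (F * CT)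
    simpa using h4
  have hg : Tendsto (fun L : ℕ => q * (((L:ℝ) - A0)/L)^m - F * CT * (L:ℝ) / (L:ℝ)^m)
      atTop (nhds q) := by
    have := h2.sub h3
    simpa using this
  have hev : ∀ᶠ L : ℕ in atTop, q - ε/2 ≤ q * (((L:ℝ) - A0)/L)^m - F * CT * (L:ℝ) / (L:ℝ)^m := by
    apply hg.eventually_const_le
    linarith
  obtain ⟨L, hL⟩ := (((hev.and (eventually_ge_atTop (k*(m-1)))).and
    (eventually_ge_atTop m)).and (eventually_ge_atTop 1)).exists
  obtain ⟨⟨⟨hgL, hL1⟩, hL2⟩, hL3⟩ := hL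
  refine ⟨L, hL1, hL2, hL3, ?_⟩
  have hLpos : (0:ℝ) < (L:ℝ) := by exact_mod_cast hL3
  have hLm : (0:ℝ) < (L:ℝ)^m := by positivity
  -- multiply through by L^m / F
  have key : (q - ε/2) * (L:ℝ)^m / F + L * CT ≤ q * ((L:ℝ) - A0)^m / F := by
    have hmul := mul_le_mul_of_nonneg_right hgL (le_of_lt (by positivity : (0:ℝ) < (L:ℝ)^m / F))
    have hid : (((L:ℝ) - A0)/L)^m * ((L:ℝ)^m / F) = ((L:ℝ) - A0)^m / F := by
      rw [div_pow]
      field_simp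
    have hid2 : (F * CT * (L:ℝ) / (L:ℝ)^m) * ((L:ℝ)^m / F) = CT * L := by
      field_simp
    calc (q - ε/2) * (L:ℝ)^m / F + L * CT
        = (q - ε/2) * ((L:ℝ)^m / F) + CT * L := by ring
      _ ≤ (q * (((L:ℝ) - A0)/L)^m - F * CT * (L:ℝ) / (L:ℝ)^m) * ((L:ℝ)^m / F) + CT * L := by
          linarith [hmul]
      _ = q * ((((L:ℝ) - A0)/L)^m * ((L:ℝ)^m / F)) - (F * CT * (L:ℝ) / (L:ℝ)^m) * ((L:ℝ)^m / F) + CT * L := by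
          ring
      _ = q * (((L:ℝ) - A0)^m / F) - CT * L + CT * L := by rw [hid, hid2]
      _ = q * ((L:ℝ) - A0)^m / F := by ring
  have hchoose : (Nat.choose L m : ℝ) ≤ (L:ℝ)^m / F := by
    rw [le_div_iff₀ hF0]
    have h5 : m.factorial * Nat.choose L m ≤ L^m := by
      rw [← Nat.descFactorial_eq_factorial_mul_choose]
      exact Nat.descFactorial_le_pow L m
    have h6 : Nat.choose L m * m.factorial ≤ L^m := by rw [mul_comm]; exact h5
    rw [hF]
    exact_mod_cast h6
  have hqε : 0 ≤ q - ε/2 := by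
    rw [hq]; linarith [hβ]
  calc (q - ε/2) * (Nat.choose L m : ℝ) + L * CT
      ≤ (q - ε/2) * ((L:ℝ)^m / F) + L * CT := by
        have := mul_le_mul_of_nonneg_left hchoose hqε
        linarith
    _ = (q - ε/2) * (L:ℝ)^m / F + L * CT := by ring
    _ ≤ q * ((L:ℝ) - A0)^m / F := key
    _ = ((L:ℝ) - A0)^m / ((k:ℝ)^(m-1) * F) := by
        rw [hq]
        have : ((k:ℝ)^(m-1)) ≠ 0 := by positivity
        field_simp


lemma liminf_aux (P : ℕ → Prop) [DecidablePred P] (β : ℝ)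
    (hfreq : ∃ᶠ N in Filter.atTop, β * N ≤ (#((Finset.range N).filter P) : ℝ)) :
    Filter.liminf (fun N : ℕ =>
      (∑ n ∈ Finset.range N, (if P n then (0:ℝ) else 1)) / N) Filter.atTop ≤ 1 - β := by
  set u : ℕ → ℝ := fun N => (∑ n ∈ Finset.range N, (if P n then (0:ℝ) else 1)) / N with hu
  have hnonneg : ∀ N, 0 ≤ u N := by
    intro N
    apply div_nonneg _ (Nat.cast_nonneg N)
    apply Finset.sum_nonneg
    intro n _
    split <;> norm_num
  apply Filter.liminf_le_of_frequently_le _ (Filter.isBoundedUnder_of ⟨0, hnonneg⟩)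
  have hfreq2 := hfreq.and_eventually (Filter.eventually_ge_atTop 1)
  apply hfreq2.mono
  rintro N ⟨hβN, hN1⟩
  have hNpos : (0:ℝ) < N := by exact_mod_cast hN1
  have hsum : (∑ n ∈ Finset.range N, (if P n then (0:ℝ) else 1))
      = (#((Finset.range N).filter (fun n => ¬ P n)) : ℝ) := by
    rw [← Finset.sum_boole]
    apply Finset.sum_congr rfl
    intro n _
    by_cases h : P n <;> simp [h]
  have hcards : #((Finset.range N).filter P) + #((Finset.range N).filter (fun n => ¬ P n)) = N := by
    rw [Finset.card_filter_add_card_filter_not, Finset.card_range]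
  show (∑ n ∈ Finset.range N, (if P n then (0:ℝ) else 1)) / N ≤ 1 - β
  rw [hsum, div_le_iff₀ hNpos]
  have : (#((Finset.range N).filter (fun n => ¬ P n)) : ℝ)
      = (N:ℝ) - (#((Finset.range N).filter P) : ℝ) := by
    have h2 := congrArg (Nat.cast : ℕ → ℝ) hcards
    push_cast at h2
    linarith
  rw [this]
  nlinarith [hβN]

/-- For any infinite word over an alphabet of size `k`, any `m ≥ 2` and any
norm on `ℝ^m`, the limit as `λ → ∞` of `inf {C_r : r normalized, ‖r‖ ≥ λ}` is at most
`1 - 1/k^(m-1)`; equivalently, for every `ε > 0` and every `λ` there is a normalized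
`r ∈ ℕ^m` with `‖r‖ ≥ λ` and `C_r ≤ 1 - 1/k^(m-1) + ε`. -/
theorem correlation_inf_bound
    (k m : ℕ) (hk : 0 < k) (hm : 2 ≤ m) (x : ℕ → ℕ) (hx : ∀ n, x n < k)
    (nrm : (Fin m → ℝ) → ℝ)
    (nrm_add : ∀ a b, nrm (a + b) ≤ nrm a + nrm b)
    (nrm_smul : ∀ (c : ℝ) (a), nrm (c • a) = |c| * nrm a)
    (nrm_eq_zero : ∀ a, nrm a = 0 ↔ a = 0)
    (ε : ℝ) (hε : 0 < ε) (lam : ℝ) :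
    ∃ r : Fin m → ℕ, r ⟨0, by omega⟩ = 0 ∧ StrictMono r ∧
      lam ≤ nrm (fun i => (r i : ℝ)) ∧
      Filter.liminf (fun N : ℕ =>
          (∑ n ∈ Finset.range N,
            (if ∀ i j : Fin m, x (n + r i) = x (n + r j) then (0 : ℝ) else 1)) / N)
        Filter.atTop ≤ 1 - 1 / (k : ℝ) ^ (m - 1) + ε := by

  obtain ⟨c, hc0, hcnorm⟩ := norm_lower (show 0 < m by omega) nrm nrm_add nrm_smul nrm_eq_zero
  obtain ⟨T, hT⟩ := exists_nat_ge (lam / c)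
  have hlamT : lam ≤ c * T := by
    rw [div_le_iff₀ hc0] at hT
    linarith
  have hnrm_bound : ∀ r : Fin m → ℕ, (T ≤ r ⟨m-1, by omega⟩) → lam ≤ nrm (fun i => (r i : ℝ)) := by
    intro r hr
    have h2 := norm_le_pi_norm (fun i => (r i : ℝ)) ⟨m-1, by omega⟩
    have h3 : ‖((r ⟨m-1, by omega⟩ : ℕ) : ℝ)‖ = ((r ⟨m-1, by omega⟩ : ℕ) : ℝ) := by
      rw [Real.norm_eq_abs, abs_of_nonneg (Nat.cast_nonneg _)]
    rw [h3] at h2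
    have h4 : (T:ℝ) ≤ ((r ⟨m-1, by omega⟩ : ℕ) : ℝ) := by exact_mod_cast hr
    have h1 : (T:ℝ) ≤ ‖(fun i => (r i : ℝ))‖ := by linarith
    calc lam ≤ c * T := hlamT
      _ ≤ c * ‖(fun i => (r i : ℝ))‖ := mul_le_mul_of_nonneg_left h1 hc0.le
      _ ≤ nrm (fun i => (r i : ℝ)) := hcnorm _
  by_cases hβpos : 0 < 1/(k:ℝ)^(m-1) - ε
  case neg =>
    refine ⟨fun i => (T+1) * i, by simp, ?_, ?_, ?_⟩
    · intro i j hij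
      have hij' : (i:ℕ) < j := hij
      exact mul_lt_mul_of_pos_left hij' (by omega)
    · apply hnrm_bound
      show T ≤ (T+1) * ((⟨m-1, by omega⟩ : Fin m) : ℕ)
      have : ((⟨m-1, by omega⟩ : Fin m) : ℕ) = m - 1 := rfl
      rw [this]
      have h1 : 1 ≤ m - 1 := by omega
      calc T ≤ (T+1) * 1 := by omega
        _ ≤ (T+1) * (m-1) := Nat.mul_le_mul_left _ h1
    · have h1 := liminf_aux (fun n => ∀ i j : Fin m,
          x (n + (T+1) * (i:ℕ)) = x (n + (T+1) * (j:ℕ))) 0 ?_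
      · rw [not_lt] at hβpos
        refine le_trans ?_ (by linarith : (1:ℝ) - 0 ≤ 1 - 1/(k:ℝ)^(m-1) + ε)
        exact h1
      · apply Filter.Eventually.frequently
        filter_upwards with N
        simp [Nat.cast_nonneg]
  case pos =>
    obtain ⟨L, hLk, hLm, hL1, hLkey⟩ := exists_L k m hk hm T ε hε hβpos
    set β : ℝ := 1/(k:ℝ)^(m-1) - ε with hβ
    clear_value β
    set Sh := (Finset.powersetCard m (Finset.range L)).filter
      (fun S₀ => 0 ∈ S₀ ∧ ∃ u ∈ S₀, ∃ v ∈ S₀, T + v ≤ u) with hSh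
    have main : ∃ S₀ ∈ Sh,
        ∃ᶠ N in Filter.atTop, β * N ≤ (#((Finset.range N).filter
          (fun n => ∀ u ∈ S₀, ∀ v ∈ S₀, x (n+u) = x (n+v))) : ℝ) := by
      by_contra hcon
      push_neg at hcon
      have hev : ∀ᶠ N : ℕ in Filter.atTop, ∀ S₀ ∈ Sh,
          (#((Finset.range N).filter
            (fun n => ∀ u ∈ S₀, ∀ v ∈ S₀, x (n+u) = x (n+v))) : ℝ) < β * N := by
        rw [Filter.eventually_all_finset]
        intro S₀ hS₀
        have h1 := hcon S₀ hS₀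
        apply h1.mono
        intro N hN
        exact hN
      have hbigev : ∀ᶠ N : ℕ in Filter.atTop, (L:ℝ)*(β+ε/2) < (ε/2) * N := by
        have h2 : Filter.Tendsto (fun N : ℕ => (ε/2) * (N:ℝ)) Filter.atTop Filter.atTop :=
          tendsto_natCast_atTop_atTop.const_mul_atTop (by linarith)
        exact h2.eventually_gt_atTop _
      obtain ⟨N, hevN, hNL, hNbig⟩ :=
        (hev.and ((Filter.eventually_ge_atTop L).and hbigev)).exists
      -- per-window lower bound
      have hwin : ∀ t : ℕ,
          ((L:ℝ) - k*(m-1))^m / ((k:ℝ)^(m-1) * m.factorial) - L * (Nat.choose T m)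
          ≤ (#((Finset.powersetCard m (Finset.Ico t (t+L))).filter
              (fun S => (∀ u ∈ S, ∀ v ∈ S, x u = x v) ∧ ∃ u ∈ S, ∃ v ∈ S, T + v ≤ u)) : ℝ) := by
        intro t
        have h1 := window_bound k m hk hm x hx t L hLk
        have h2 : ((Finset.powersetCard m (Finset.Ico t (t+L))).filter
              (fun S => ∀ u ∈ S, ∀ v ∈ S, x u = x v)) ⊆
            ((Finset.powersetCard m (Finset.Ico t (t+L))).filter
              (fun S => (∀ u ∈ S, ∀ v ∈ S, x u = x v) ∧ ∃ u ∈ S, ∃ v ∈ S, T + v ≤ u)) ∪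
            ((Finset.powersetCard m (Finset.Ico t (t+L))).filter
              (fun S => ¬ ∃ u ∈ S, ∃ v ∈ S, T + v ≤ u)) := by
          intro S hS
          rw [Finset.mem_filter] at hS
          rw [Finset.mem_union, Finset.mem_filter, Finset.mem_filter]
          by_cases hbigS : ∃ u ∈ S, ∃ v ∈ S, T + v ≤ u
          · left; exact ⟨hS.1, hS.2, hbigS⟩
          · right; exact ⟨hS.1, hbigS⟩
        have h3 := (Finset.card_le_card h2).trans (Finset.card_union_le _ _)
        have h4 := small_diam_le m T L t (by omega)
        have h5 : #((Finset.powersetCard m (Finset.Ico t (t+L))).filter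
              (fun S => ∀ u ∈ S, ∀ v ∈ S, x u = x v))
            ≤ #((Finset.powersetCard m (Finset.Ico t (t+L))).filter
              (fun S => (∀ u ∈ S, ∀ v ∈ S, x u = x v) ∧ ∃ u ∈ S, ∃ v ∈ S, T + v ≤ u))
              + L * Nat.choose T m := by omega
        have h6 : (#((Finset.powersetCard m (Finset.Ico t (t+L))).filter
              (fun S => ∀ u ∈ S, ∀ v ∈ S, x u = x v)) : ℝ)
            ≤ (#((Finset.powersetCard m (Finset.Ico t (t+L))).filter
              (fun S => (∀ u ∈ S, ∀ v ∈ S, x u = x v) ∧ ∃ u ∈ S, ∃ v ∈ S, T + v ≤ u)) : ℝ)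
              + (L : ℝ) * (Nat.choose T m : ℝ) := by exact_mod_cast h5
        linarith
      have hPlow : (↑(N - L + 1) : ℝ) *
          (((L:ℝ) - k*(m-1))^m / ((k:ℝ)^(m-1) * m.factorial) - L * (Nat.choose T m))
          ≤ (#((Finset.range (N - L + 1)).sigma (fun t =>
              (Finset.powersetCard m (Finset.Ico t (t+L))).filter
                (fun S => (∀ u ∈ S, ∀ v ∈ S, x u = x v) ∧ ∃ u ∈ S, ∃ v ∈ S, T + v ≤ u))) : ℝ) := by
        rw [Finset.card_sigma]
        rw [Nat.cast_sum]
        calc (↑(N - L + 1) : ℝ) *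
            (((L:ℝ) - k*(m-1))^m / ((k:ℝ)^(m-1) * m.factorial) - L * (Nat.choose T m))
            = ∑ _t ∈ Finset.range (N - L + 1),
              (((L:ℝ) - k*(m-1))^m / ((k:ℝ)^(m-1) * m.factorial) - L * (Nat.choose T m)) := by
              rw [Finset.sum_const, Finset.card_range, nsmul_eq_mul]
          _ ≤ _ := Finset.sum_le_sum (fun t _ => hwin t)
      have hcount := count_le x m T L N (by omega) hNL hL1
      have hweight := weight_sum_le m L (by omega)
        (fun S₀ => ∃ u ∈ S₀, ∃ v ∈ S₀, T + v ≤ u)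
      have hβN : (0:ℝ) ≤ β * N := by
        exact mul_nonneg hβpos.le (Nat.cast_nonneg _)
      have hup : (#((Finset.range (N - L + 1)).sigma (fun t =>
              (Finset.powersetCard m (Finset.Ico t (t+L))).filter
                (fun S => (∀ u ∈ S, ∀ v ∈ S, x u = x v) ∧ ∃ u ∈ S, ∃ v ∈ S, T + v ≤ u))) : ℝ)
          ≤ β * N * (Nat.choose L m) := by
        calc (#((Finset.range (N - L + 1)).sigma (fun t =>
              (Finset.powersetCard m (Finset.Ico t (t+L))).filter
                (fun S => (∀ u ∈ S, ∀ v ∈ S, x u = x v) ∧ ∃ u ∈ S, ∃ v ∈ S, T + v ≤ u))) : ℝ)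
            ≤ (↑(∑ S₀ ∈ Sh,
              (#((Finset.range N).filter (fun n => ∀ u ∈ S₀, ∀ v ∈ S₀, x (n+u) = x (n+v))))
                * (L - S₀.sup id)) : ℝ) := by exact_mod_cast hcount
          _ = ∑ S₀ ∈ Sh,
              (#((Finset.range N).filter (fun n => ∀ u ∈ S₀, ∀ v ∈ S₀, x (n+u) = x (n+v))) : ℝ)
                * ((L - S₀.sup id : ℕ) : ℝ) := by push_cast; rfl
          _ ≤ ∑ S₀ ∈ Sh, (β * N) * ((L - S₀.sup id : ℕ) : ℝ) := by
              apply Finset.sum_le_sum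
              intro S₀ hS₀
              exact mul_le_mul_of_nonneg_right (le_of_lt (hevN S₀ hS₀)) (Nat.cast_nonneg _)
          _ = (β * N) * (↑(∑ S₀ ∈ Sh, (L - S₀.sup id)) : ℝ) := by
              rw [← Finset.mul_sum, Nat.cast_sum]
          _ ≤ β * N * (Nat.choose L m) := by
              apply mul_le_mul_of_nonneg_left _ hβN
              exact_mod_cast hweight
      have hCLpos : (0:ℝ) < (Nat.choose L m : ℝ) := by exact_mod_cast Nat.choose_pos hLm
      have hkey2 : (β + ε/2) * (Nat.choose L m : ℝ) + L * (Nat.choose T m)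
          ≤ ((L:ℝ) - k*(m-1))^m / ((k:ℝ)^(m-1) * m.factorial) := by
        have : (1/(k:ℝ)^(m-1) - ε/2) = β + ε/2 := by rw [hβ]; ring
        rw [← this]
        exact hLkey
      have hNLcast : (↑(N - L + 1) : ℝ) = (N:ℝ) - L + 1 := by
        have := Nat.cast_sub (R := ℝ) hNL
        push_cast [this]
        ring
      have hNL1pos : (0:ℝ) ≤ (N:ℝ) - L + 1 := by
        have : (L:ℝ) ≤ N := by exact_mod_cast hNL
        linarith
      have hchain : ((N:ℝ) - L + 1) * ((β + ε/2) * (Nat.choose L m : ℝ))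
          ≤ β * N * (Nat.choose L m) := by
        calc ((N:ℝ) - L + 1) * ((β + ε/2) * (Nat.choose L m : ℝ))
            ≤ ((N:ℝ) - L + 1) *
              (((L:ℝ) - k*(m-1))^m / ((k:ℝ)^(m-1) * m.factorial) - L * (Nat.choose T m)) := by
              apply mul_le_mul_of_nonneg_left _ hNL1pos
              linarith
          _ ≤ _ := by rw [← hNLcast]; exact hPlow.trans hup
      have hfin : ((N:ℝ) - L + 1) * (β + ε/2) ≤ β * N := by
        have h8 : (((N:ℝ) - L + 1) * (β + ε/2)) * (Nat.choose L m : ℝ)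
            ≤ (β * N) * (Nat.choose L m : ℝ) := by
          calc (((N:ℝ) - L + 1) * (β + ε/2)) * (Nat.choose L m : ℝ)
              = ((N:ℝ) - L + 1) * ((β + ε/2) * (Nat.choose L m : ℝ)) := by ring
            _ ≤ β * N * (Nat.choose L m) := hchain
        exact le_of_mul_le_mul_right h8 hCLpos
      have hLcast : (0:ℝ) < β := hβpos
      nlinarith [hfin, hNbig, hLcast, hε]
    obtain ⟨S₀, hS₀Sh, hfreq⟩ := main
    rw [hSh, Finset.mem_filter, Finset.mem_powersetCard] at hS₀Sh
    obtain ⟨⟨hS₀sub, hS₀card⟩, h0mem, u₀, hu₀, v₀, hv₀, hbig⟩ := hS₀Sh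
    set iso := S₀.orderIsoOfFin hS₀card with hiso
    set r : Fin m → ℕ := fun i => (iso i : ℕ) with hr
    have hrmem : ∀ i, r i ∈ S₀ := fun i => (iso i).2
    have hrmono : StrictMono r := by
      intro i j hij
      exact Subtype.coe_lt_coe.2 (iso.lt_iff_lt.2 hij)
    have hr0 : r ⟨0, by omega⟩ = 0 := by
      have h2 : r (iso.symm ⟨0, h0mem⟩) = 0 := by
        rw [hr]
        simp
      have h3 : r ⟨0, by omega⟩ ≤ r (iso.symm ⟨0, h0mem⟩) := by
        apply hrmono.monotone
        exact Fin.mk_le_of_le_val (Nat.zero_le _)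
      omega
    have hrlast : T ≤ r ⟨m-1, by omega⟩ := by
      have h2 : r (iso.symm ⟨u₀, hu₀⟩) = u₀ := by
        rw [hr]
        simp
      have h3 : r (iso.symm ⟨u₀, hu₀⟩) ≤ r ⟨m-1, by omega⟩ := by
        apply hrmono.monotone
        rw [Fin.le_def]
        have := (iso.symm ⟨u₀, hu₀⟩).isLt
        simp only
        omega
      omega
    refine ⟨r, hr0, hrmono, hnrm_bound r hrlast, ?_⟩
    have hsub2 : ∀ N : ℕ,
        #((Finset.range N).filter (fun n => ∀ u ∈ S₀, ∀ v ∈ S₀, x (n+u) = x (n+v)))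
        ≤ #((Finset.range N).filter (fun n => ∀ i j : Fin m, x (n + r i) = x (n + r j))) := by
      intro N
      apply Finset.card_le_card
      intro n hn
      rw [Finset.mem_filter] at hn ⊢
      exact ⟨hn.1, fun i j => hn.2 (r i) (hrmem i) (r j) (hrmem j)⟩
    have hfreq2 : ∃ᶠ N in Filter.atTop, β * N ≤
        (#((Finset.range N).filter (fun n => ∀ i j : Fin m, x (n + r i) = x (n + r j))) : ℝ) := by
      apply hfreq.mono
      intro N hN
      exact hN.trans (by exact_mod_cast hsub2 N)
    have hfinal := liminf_aux (fun n => ∀ i j : Fin m, x (n + r i) = x (n + r j)) β hfreq2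
    refine le_trans hfinal ?_
    rw [hβ]
    linarith
end

section
/- Suppose we have a multiset of n objects, each assigned one of k types, and let d ≤ n be a fixed positive integer. Then among the C(n,d) subsets of d objects, the number of subsets containing at least one pair of objects of different types is at most (n^d / d!) · (1 − 1/k^{d−1}). Equivalently, if b_1, …, b_k ≥ 0 are integers with b_1 + ⋯ + b_k = n, then C(n,d) − Σ_{i=1}^{k} C(b_i, d) ≤ (n^d / d!) · (1 − 1/k^{d−1}). -/
open Finset

lemma desc_superadd (d : ℕ) (hd : 0 < d) : ∀ a b : ℕ,
    a.descFactorial d + b.descFactorial d ≤ (a + b).descFactorial d := by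
  induction d with
  | zero => omega
  | succ d ih =>
    intro a b
    rcases Nat.eq_zero_or_pos d with rfl | hd'
    · simp
    · have h := ih hd' a b
      rw [Nat.descFactorial_succ, Nat.descFactorial_succ, Nat.descFactorial_succ]
      calc (a - d) * a.descFactorial d + (b - d) * b.descFactorial d
          ≤ (a + b - d) * a.descFactorial d + (a + b - d) * b.descFactorial d := by
            gcongr <;> omega
        _ = (a + b - d) * (a.descFactorial d + b.descFactorial d) := by ring
        _ ≤ (a + b - d) * (a + b).descFactorial d := Nat.mul_le_mul_left _ h

lemma desc_succ_add (m d : ℕ) :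
    m.descFactorial (d + 1) + d * m.descFactorial d = m * m.descFactorial d := by
  rcases le_or_gt d m with h | h
  · rw [Nat.descFactorial_succ, ← add_mul, Nat.sub_add_cancel h]
  · rw [Nat.descFactorial_eq_zero_iff_lt.mpr h,
      Nat.descFactorial_eq_zero_iff_lt.mpr (by omega)]
    simp

lemma key (d a b : ℕ) :
    (a + b).descFactorial d + a ^ d + b ^ d
      ≤ (a + b) ^ d + a.descFactorial d + b.descFactorial d := by
  induction d with
  | zero => simp
  | succ d ih =>
    have Ia := desc_succ_add a d
    have Ib := desc_succ_add b d
    have Is := desc_succ_add (a + b) d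
    have hsup : d * (a.descFactorial d + b.descFactorial d)
        ≤ d * (a + b).descFactorial d := by
      rcases Nat.eq_zero_or_pos d with rfl | hd'
      · simp
      · exact Nat.mul_le_mul_left _ (desc_superadd d hd' a b)
    have h1 : (a + b) * ((a + b).descFactorial d + a ^ d + b ^ d)
        ≤ (a + b) * ((a + b) ^ d + a.descFactorial d + b.descFactorial d) :=
      Nat.mul_le_mul_left _ ih
    have h2 : b * a.descFactorial d ≤ b * a ^ d :=
      Nat.mul_le_mul_left _ (Nat.descFactorial_le_pow a d)
    have h3 : a * b.descFactorial d ≤ a * b ^ d :=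
      Nat.mul_le_mul_left _ (Nat.descFactorial_le_pow b d)
    rw [pow_succ, pow_succ, pow_succ]
    zify at h1 h2 h3 hsup Ia Ib Is ⊢
    nlinarith [h1, h2, h3, hsup, Ia, Ib, Is]

lemma key_sum {ι : Type*} [DecidableEq ι] (d : ℕ) (s : Finset ι) (b : ι → ℕ) :
    (∑ i ∈ s, b i).descFactorial d + ∑ i ∈ s, (b i) ^ d
      ≤ (∑ i ∈ s, b i) ^ d + ∑ i ∈ s, (b i).descFactorial d := by
  induction s using Finset.induction with
  | empty => simpa using Nat.descFactorial_le_pow 0 d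
  | @insert a t hx ih =>
    rw [Finset.sum_insert hx, Finset.sum_insert hx, Finset.sum_insert hx]
    have h := key d (b a) (∑ i ∈ t, b i)
    omega

/-- Lemma 1: If `b₁ + ⋯ + b_k = n` are the multiplicities of the `k` types
among `n` objects and `0 < d ≤ n`, then the number of `d`-element subsets containing at
least one pair of objects of different types, namely `C(n,d) - ∑ᵢ C(bᵢ,d)`, is at most
`(n^d / d!) · (1 - 1/k^(d-1))`. -/
theorem subsets_with_two_types_bound
    (k n d : ℕ) (hk : 0 < k) (hd : 0 < d) (hdn : d ≤ n)
    (b : Fin k → ℕ) (hb : ∑ i, b i = n) :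
    ((n.choose d : ℝ) - ∑ i, ((b i).choose d : ℝ))
      ≤ (n : ℝ) ^ d / (d.factorial : ℝ) * (1 - 1 / (k : ℝ) ^ (d - 1)) := by
  have hfac : (0 : ℝ) < (d.factorial : ℝ) := by positivity
  have hkpow : (0 : ℝ) < (k : ℝ) ^ (d - 1) := by positivity
  -- choose = descFactorial / d!
  have hch : ∀ m : ℕ, (m.choose d : ℝ) = (m.descFactorial d : ℝ) / (d.factorial : ℝ) := by
    intro m
    rw [eq_div_iff hfac.ne']
    rw [mul_comm]
    exact_mod_cast (Nat.descFactorial_eq_factorial_mul_choose m d).symm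
  -- power mean
  have hpm : (n : ℝ) ^ d / (k : ℝ) ^ (d - 1) ≤ ∑ i, ((b i : ℝ)) ^ d := by
    have := pow_sum_div_card_le_sum_pow (s := (univ : Finset (Fin k)))
      (f := fun i => (b i : ℝ)) (fun i _ => by positivity) (d - 1)
    rw [show d - 1 + 1 = d by omega] at this
    simpa [Finset.card_univ, ← Nat.cast_sum, hb] using this
  -- key inequality, cast to ℝ
  have hkey : (n.descFactorial d : ℝ) + ∑ i, ((b i : ℝ)) ^ d
      ≤ (n : ℝ) ^ d + ∑ i, ((b i).descFactorial d : ℝ) := by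
    have := key_sum d (univ : Finset (Fin k)) b
    rw [hb] at this
    exact_mod_cast this
  have step : ((n.descFactorial d : ℝ) - ∑ i, ((b i).descFactorial d : ℝ))
      ≤ (n : ℝ) ^ d * (1 - 1 / (k : ℝ) ^ (d - 1)) := by
    have : (n : ℝ) ^ d * (1 - 1 / (k : ℝ) ^ (d - 1))
        = (n : ℝ) ^ d - (n : ℝ) ^ d / (k : ℝ) ^ (d - 1) := by
      field_simp
    rw [this]
    linarith
  simp only [hch]
  rw [← Finset.sum_div, div_mul_eq_mul_div, div_sub_div_same, div_le_div_iff_of_pos_right hfac]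
  exact step
end

section
/- Let k be a prime, g an admissible function, (a(n))_{n≥0} an integer sequence with a(nk+j) = a(n) + g(j,n) for 0 ≤ j ≤ k−1 and n ≥ 1, and let 1 ≤ h ≤ k−1. Then for every function f : ℕ → ℤ periodic with period k, every integer i with 1 ≤ i ≤ k, and every integer N > k, | Σ_{n<N} e((h/k)(a(n+i) − a(n))) · e((h/k) f(n)) | ≤ (k²(k+3)/(2 log k)) · log(N/k) + k² + 2k − 1, where e(z) = e^{2πiz}. -/
open Finset Real

/-- `e(z) = exp(2πiz)`. -/
noncomputable def e (z : ℝ) : ℂ := Complex.exp (2 * Real.pi * Complex.I * z)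

/-- A function `g : {0,…,k-1} × ℤ → ℤ` (encoded as `g : ℕ → ℤ → ℤ`), periodic in its
second argument with period `k`, is admissible if for all `0 ≤ u < u + i ≤ k - 1` the set
`{(g(u+i,n) - g(u,n)) mod k : 0 ≤ n ≤ k-1}` equals `{0,1,…,k-1}`. -/
def Admissible (k : ℕ) (g : ℕ → ℤ → ℤ) : Prop :=
  (∀ (j : ℕ) (n : ℤ), g j (n + k) = g j n) ∧
  (∀ u i : ℕ, 0 < i → u + i ≤ k - 1 → ∀ c : ℕ, c < k →
    ∃ n : ℕ, n < k ∧ (g (u + i) (n : ℤ) - g u (n : ℤ)) % (k : ℤ) = (c : ℤ))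

lemma e_add (x y : ℝ) : e (x + y) = e x * e y := by
  rw [e, e, e, ← Complex.exp_add]; push_cast; ring_nf

lemma abs_e (x : ℝ) : ‖e x‖ = 1 := by
  have h1 : (2 * Real.pi * Complex.I * (x:ℂ)) = ((2*Real.pi*x : ℝ) : ℂ) * Complex.I := by
    push_cast; ring
  rw [e, h1, Complex.norm_exp]
  simp

lemma e_int (n : ℤ) : e n = 1 := by
  have h1 : (2 * Real.pi * Complex.I * ((n:ℝ):ℂ)) = (n:ℂ) * (2 * Real.pi * Complex.I) := by
    push_cast; ring
  rw [e, h1, Complex.exp_int_mul_two_pi_mul_I]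

noncomputable def w (h k : ℕ) (d : ℤ) : ℂ := e ((h:ℝ)/(k:ℝ) * (d:ℝ))

lemma abs_w (h k : ℕ) (d : ℤ) : ‖w h k d‖ = 1 := abs_e _

lemma w_add (h k : ℕ) (d₁ d₂ : ℤ) : w h k (d₁ + d₂) = w h k d₁ * w h k d₂ := by
  rw [w, w, w, ← e_add]; push_cast; ring_nf

lemma w_mul_int (h k : ℕ) (hk : k ≠ 0) (t : ℤ) : w h k ((k:ℤ) * t) = 1 := by
  have : (h:ℝ)/(k:ℝ) * (((k:ℤ)*t : ℤ):ℝ) = ((h*t : ℤ):ℝ) := by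
    push_cast
    field_simp
  rw [w, this, e_int]

lemma w_mod (h k : ℕ) (hk : k ≠ 0) (d : ℤ) : w h k d = w h k (d % k) := by
  conv_lhs => rw [← Int.emod_add_mul_ediv d k]
  rw [w_add, w_mul_int h k hk, mul_one]

lemma w_sum_zero (h k : ℕ) (hh1 : 0 < h) (hh2 : h < k) :
    ∑ c ∈ Finset.range k, w h k (c : ℤ) = 0 := by
  have hk0 : (0:ℝ) < k := by exact_mod_cast Nat.pos_of_ne_zero (by omega)
  set z : ℂ := e ((h:ℝ)/(k:ℝ)) with hz
  have hwc : ∀ c : ℕ, w h k (c : ℤ) = z ^ c := by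
    intro c
    rw [w, hz, e, e]
    rw [← Complex.exp_nat_mul]
    congr 1
    push_cast; ring
  have hz1 : z ≠ 1 := by
    rw [hz, e]
    intro hcon
    rw [Complex.exp_eq_one_iff] at hcon
    obtain ⟨n, hn⟩ := hcon
    have h2 : (2 * Real.pi * Complex.I) ≠ 0 := by
      simp [Real.pi_ne_zero, Complex.I_ne_zero]
    have h3 : ((((h:ℝ)/(k:ℝ)) : ℝ) : ℂ) = (n:ℂ) := by
      apply mul_left_cancel₀ h2
      rw [hn]; ring
    have h4 : (h:ℝ)/(k:ℝ) = (n:ℝ) := by exact_mod_cast h3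
    have h5 : (0:ℝ) < (n:ℝ) := by
      rw [← h4]; positivity
    have h6 : (n:ℝ) < 1 := by
      rw [← h4, div_lt_one hk0]; exact_mod_cast hh2
    have h7 : (0:ℤ) < n := by exact_mod_cast h5
    have h8 : n < 1 := by exact_mod_cast h6
    omega
  have hzk : z ^ k = 1 := by
    rw [hz, e, ← Complex.exp_nat_mul]
    have : (k:ℂ) * (2 * Real.pi * Complex.I * ((h:ℝ)/(k:ℝ) : ℝ)) = (h:ℤ) * (2 * Real.pi * Complex.I) := by
      push_cast
      have : (k:ℂ) ≠ 0 := by exact_mod_cast (by positivity : (0:ℝ) < k).ne'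
      field_simp
    rw [this, Complex.exp_int_mul_two_pi_mul_I]
  have := geom_sum_eq hz1 k
  calc ∑ c ∈ Finset.range k, w h k (c:ℤ) = ∑ c ∈ Finset.range k, z ^ c := by
        exact Finset.sum_congr rfl (fun c _ => hwc c)
    _ = (z ^ k - 1)/(z - 1) := this
    _ = 0 := by rw [hzk]; simp

-- card bound
lemma abs_sum_le_card (s : Finset ℕ) (W : ℕ → ℂ)
    (h1 : ∀ m, ‖W m‖ ≤ 1) :
    ‖∑ m ∈ s, W m‖ ≤ (s.card : ℝ) := by
  have h2 : ‖∑ m ∈ s, W m‖ ≤ ∑ m ∈ s, ‖W m‖ := norm_sum_le _ _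
  refine h2.trans ?_
  calc ∑ m ∈ s, ‖W m‖ ≤ ∑ m ∈ s, (1:ℝ) := by
        refine Finset.sum_le_sum (fun m _ => ?_)
        exact h1 m
    _ = (s.card : ℝ) := by simp

-- block_half
lemma block_half (k : ℕ) (hk : 0 < k) (W : ℕ → ℂ) (hW : ∀ m, W (m + k) = W m)
    (hW1 : ∀ m, ‖W m‖ ≤ 1) (hW0 : ∑ m ∈ Finset.range k, W m = 0) :
    ∀ a b : ℕ, ‖∑ m ∈ Finset.Ico a b, W m‖ ≤ (k : ℝ) / 2 := by
  have hblock : ∀ a : ℕ, ∑ m ∈ Finset.Ico a (a + k), W m = 0 := by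
    intro a
    induction a with
    | zero =>
      rw [show (0:ℕ)+k = k from by omega, ← Finset.range_eq_Ico]
      exact hW0
    | succ n ih =>
      have h1 : ∑ m ∈ Finset.Ico n (n + 1 + k), W m
          = W n + ∑ m ∈ Finset.Ico (n+1) (n+1+k), W m :=
        Finset.sum_eq_sum_Ico_succ_bot (by omega : n < n + 1 + k) W
      have h2 : ∑ m ∈ Finset.Ico n (n + 1 + k), W m
          = (∑ m ∈ Finset.Ico n (n + k), W m) + W (n + k) := by
        have : n + 1 + k = (n + k) + 1 := by omega
        rw [this, Finset.sum_Ico_succ_top (by omega : n ≤ n + k)]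
      rw [hW n] at h2
      have := h1.symm.trans h2
      have h3 : ∑ m ∈ Finset.Ico (n+1) (n+1+k), W m = ∑ m ∈ Finset.Ico n (n + k), W m := by
        linear_combination this
      rw [h3, ih]
  -- main: strong induction on b - a
  have key : ∀ t a b : ℕ, b - a ≤ t → ‖∑ m ∈ Finset.Ico a b, W m‖ ≤ (k : ℝ) / 2 := by
    intro t
    induction t with
    | zero =>
      intro a b hab
      have : Finset.Ico a b = ∅ := by
        apply Finset.Ico_eq_empty; omega
      rw [this]
      simp
      positivity
    | succ t ih =>
      intro a b hab
      by_cases hba : b ≤ a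
      · rw [Finset.Ico_eq_empty (by omega)]
        simp; positivity
      push_neg at hba
      by_cases hbk : a + k ≤ b
      · -- strip a full block
        have hsplit : ∑ m ∈ Finset.Ico a b, W m
            = (∑ m ∈ Finset.Ico a (a+k), W m) + ∑ m ∈ Finset.Ico (a+k) b, W m :=
          (Finset.sum_Ico_consecutive _ (by omega) hbk).symm
        rw [hsplit, hblock, zero_add]
        exact ih (a+k) b (by omega)
      · push_neg at hbk
        -- partial block: both bounds
        have hb1 : ‖∑ m ∈ Finset.Ico a b, W m‖ ≤ ((b - a : ℕ) : ℝ) :=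
          abs_sum_le_card _ _ hW1 |>.trans_eq (by simp)
        have hb2 : ‖∑ m ∈ Finset.Ico a b, W m‖ ≤ ((a + k - b : ℕ) : ℝ) := by
          have hsplit : (∑ m ∈ Finset.Ico a b, W m) + ∑ m ∈ Finset.Ico b (a+k), W m = 0 := by
            rw [Finset.sum_Ico_consecutive _ (by omega : a ≤ b) (by omega : b ≤ a + k)]
            exact hblock a
          have heq : ∑ m ∈ Finset.Ico a b, W m = -∑ m ∈ Finset.Ico b (a+k), W m := by
            linear_combination hsplit
          rw [heq, norm_neg]
          exact abs_sum_le_card _ _ hW1 |>.trans_eq (by simp)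
        by_cases hc : 2 * (b - a) ≤ k
        · refine hb1.trans ?_
          have : ((2*(b-a):ℕ):ℝ) ≤ (k:ℝ) := by exact_mod_cast hc
          push_cast at this
          linarith
        · refine hb2.trans ?_
          push_neg at hc
          have h1 : (a + k - b : ℕ) * 2 ≤ k := by omega
          have : ((a+k-b:ℕ):ℝ) * 2 ≤ (k:ℝ) := by exact_mod_cast h1
          linarith
  intro a b; exact key (b - a) a b le_rfl

-- grid reindex
lemma sum_grid (k : ℕ) (hk : 0 < k) (G : ℕ → ℂ) :
    ∀ d c : ℕ, ∑ n ∈ Finset.Ico (c*k) (d*k), G n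
      = ∑ m ∈ Finset.Ico c d, ∑ j ∈ Finset.range k, G (m*k + j) := by
  intro d
  induction d with
  | zero => intro c; simp
  | succ d ih =>
    intro c
    by_cases hcd : c ≤ d
    · have h1 : ∑ n ∈ Finset.Ico (c*k) ((d+1)*k), G n
          = (∑ n ∈ Finset.Ico (c*k) (d*k), G n) + ∑ n ∈ Finset.Ico (d*k) (d*k+k), G n := by
        rw [Finset.sum_Ico_consecutive _ (by exact Nat.mul_le_mul_right k hcd) (by nlinarith [Nat.succ_mul d k])]
        congr 2
        ring
      rw [h1, ih c, Finset.sum_Ico_succ_top hcd]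
      congr 1
      rw [Finset.sum_Ico_eq_sum_range]
      simp
    · have h0 : (d+1)*k ≤ c * k := Nat.mul_le_mul_right k (by omega)
      rw [Finset.Ico_eq_empty (Nat.not_lt.mpr h0), Finset.Ico_eq_empty (by omega)]
      simp

-- periodic on multiples
lemma per_mul (k : ℕ) (F : ℕ → ℤ) (hF : ∀ n, F (n + k) = F n) :
    ∀ m j, F (m * k + j) = F j := by
  intro m
  induction m with
  | zero => simp
  | succ m ih =>
    intro j
    have : (m+1) * k + j = (m * k + j) + k := by ring
    rw [this, hF, ih]

-- full-block cancellation from admissibility, for any interval: ≤ k/2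
lemma goodj_bound (k : ℕ) (hkpos : 0 < k) (g : ℕ → ℤ → ℤ) (hg : Admissible k g)
    (h : ℕ) (hh1 : 0 < h) (hh2 : h < k)
    (u i : ℕ) (hi : 0 < i) (hui : u + i ≤ k - 1) (c₀ : ℤ) :
    ∀ A B : ℕ, ‖∑ m ∈ Finset.Ico A B,
      w h k (g (u+i) (m : ℤ) - g u (m : ℤ) + c₀)‖ ≤ (k : ℝ) / 2 := by
  set W : ℕ → ℂ := fun m => w h k (g (u+i) (m : ℤ) - g u (m : ℤ) + c₀) with hW
  have hper : ∀ m : ℕ, W (m + k) = W m := by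
    intro m
    simp only [hW]
    have hc : ((m + k : ℕ) : ℤ) = (m : ℤ) + (k : ℤ) := by push_cast; ring
    rw [hc, hg.1, hg.1]
  have habs : ∀ m, ‖W m‖ = 1 := fun m => abs_w _ _ _
  have hzero : ∑ m ∈ Finset.range k, W m = 0 := by
    have hfac : ∀ m : ℕ, W m = w h k (g (u+i) (m:ℤ) - g u (m:ℤ)) * w h k c₀ := by
      intro m; simp only [hW]; rw [← w_add]
    have : ∑ m ∈ Finset.range k, W m
        = (∑ m ∈ Finset.range k, w h k (g (u+i) (m:ℤ) - g u (m:ℤ))) * w h k c₀ := by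
      rw [Finset.sum_mul]
      exact Finset.sum_congr rfl (fun m _ => hfac m)
    rw [this]
    have hmain : ∑ m ∈ Finset.range k, w h k (g (u+i) (m:ℤ) - g u (m:ℤ)) = 0 := by
      set D : ℕ → ℤ := fun m => g (u+i) (m:ℤ) - g u (m:ℤ) with hD
      set τ : ℕ → ℕ := fun m => (D m % (k:ℤ)).toNat with hτ
      have hτlt : ∀ m, τ m < k := by
        intro m
        simp only [hτ]
        have h1 : 0 ≤ D m % (k:ℤ) := Int.emod_nonneg _ (by exact_mod_cast hkpos.ne')
        have h2 : D m % (k:ℤ) < k := Int.emod_lt_of_pos _ (by exact_mod_cast hkpos)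
        omega
      have himg : (Finset.range k).image τ = Finset.range k := by
        apply Finset.eq_of_subset_of_card_le
        · intro c hc
          obtain ⟨m, hm, rfl⟩ := Finset.mem_image.mp hc
          exact Finset.mem_range.mpr (hτlt m)
        · rw [Finset.card_range]
          -- surjectivity: every c < k is in the image
          have hsub : Finset.range k ⊆ (Finset.range k).image τ := by
            intro c hc
            obtain ⟨n, hn, hnc⟩ := hg.2 u i hi hui c (Finset.mem_range.mp hc)
            refine Finset.mem_image.mpr ⟨n, Finset.mem_range.mpr hn, ?_⟩
            simp only [hτ, hD]
            rw [hnc]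
            simp
          calc k = (Finset.range k).card := (Finset.card_range k).symm
            _ ≤ ((Finset.range k).image τ).card := Finset.card_le_card hsub
      have hinj : ∀ x ∈ Finset.range k, ∀ y ∈ Finset.range k, τ x = τ y → x = y := by
        have := Finset.injOn_of_card_image_eq (s := Finset.range k) (f := τ)
          (by rw [himg])
        intro x hx y hy hxy
        exact this (Finset.mem_coe.mpr hx) (Finset.mem_coe.mpr hy) hxy
      have hwD : ∀ m, w h k (D m) = w h k ((τ m : ℕ) : ℤ) := by
        intro m
        rw [w_mod h k hkpos.ne' (D m)]
        congr 1
        simp only [hτ]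
        have h1 : 0 ≤ D m % (k:ℤ) := Int.emod_nonneg _ (by exact_mod_cast hkpos.ne')
        omega
      calc ∑ m ∈ Finset.range k, w h k (D m)
          = ∑ m ∈ Finset.range k, (fun c : ℕ => w h k (c : ℤ)) (τ m) := by
            exact Finset.sum_congr rfl (fun m _ => hwD m)
        _ = ∑ c ∈ (Finset.range k).image τ, w h k ((c : ℕ) : ℤ) :=
              (Finset.sum_image (g := τ) (f := fun c : ℕ => w h k ((c : ℕ) : ℤ)) hinj).symm
        _ = ∑ c ∈ Finset.range k, w h k (c : ℤ) := by rw [himg]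
        _ = 0 := w_sum_zero h k hh1 hh2
    rw [hmain, zero_mul]
  intro A B
  exact block_half k hkpos W hper (fun m => (habs m).le) hzero A B

lemma Tbound (k : ℕ) (hk2 : 2 ≤ k) (g : ℕ → ℤ → ℤ) (hg : Admissible k g)
    (a : ℕ → ℤ)
    (ha : ∀ n : ℕ, 1 ≤ n → ∀ j : ℕ, j < k → a (n * k + j) = a n + g j (n : ℤ))
    (h : ℕ) (hh1 : 0 < h) (hh2 : h < k) :
    ∀ (t M : ℕ) (F : ℕ → ℤ), (∀ n, F (n + k) = F n) → M ≤ k^(t+1) + 1 →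
    ‖∑ m ∈ Finset.Ico 1 M, w h k (a (m+1) - a m + F m)‖
      ≤ ((k:ℝ) * ((k:ℝ)+3)/2) * (t:ℝ) + (k:ℝ) := by
  have hkpos : 0 < k := by omega
  have hKR : (2:ℝ) ≤ (k:ℝ) := by exact_mod_cast hk2
  -- card bound helper
  have hcard : ∀ (A B : ℕ) (D : ℕ → ℤ),
      ‖∑ m ∈ Finset.Ico A B, w h k (D m)‖ ≤ ((B - A : ℕ) : ℝ) := by
    intro A B D
    have := abs_sum_le_card (Finset.Ico A B) (fun m => w h k (D m)) (fun m => (abs_w _ _ _).le)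
    simpa [Nat.card_Ico] using this
  intro t
  induction t with
  | zero =>
    intro M F hF hM
    have h1 : ‖∑ m ∈ Finset.Ico 1 M, w h k (a (m+1) - a m + F m)‖
        ≤ ((M - 1 : ℕ) : ℝ) := hcard 1 M _
    have h2 : ((M - 1 : ℕ) : ℝ) ≤ (k : ℝ) := by
      have : M - 1 ≤ k := by simp at hM; omega
      exact_mod_cast this
    simpa using h1.trans h2
  | succ t ih =>
    intro M F hF hM
    by_cases hMk : M ≤ k + 1
    · have h1 : ‖∑ m ∈ Finset.Ico 1 M, w h k (a (m+1) - a m + F m)‖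
          ≤ ((M - 1 : ℕ) : ℝ) := hcard 1 M _
      have h2 : ((M - 1 : ℕ) : ℝ) ≤ (k : ℝ) := by
        have : M - 1 ≤ k := by omega
        exact_mod_cast this
      refine (h1.trans h2).trans ?_
      have : (0:ℝ) ≤ ((k:ℝ) * ((k:ℝ)+3)/2) * ((t:ℝ)+1) := by positivity
      push_cast
      linarith
    push_neg at hMk
    set Q := M / k with hQdef
    have hQ1 : 1 ≤ Q := Nat.one_le_div_iff hkpos |>.mpr (by omega)
    have hQkM : Q * k ≤ M := Nat.div_mul_le_self M k
    have hkQk : k ≤ Q * k := by nlinarith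
    have hmod : M - Q * k = M % k := by
      have h5 : Q * k + M % k = M := by
        rw [hQdef, Nat.mul_comm]; exact Nat.div_add_mod M k
      omega
    have hmodlt : M % k < k := Nat.mod_lt _ hkpos
    set G : ℕ → ℂ := fun n => w h k (a (n+1) - a n + F n) with hG
    -- decomposition
    have hs1 : ∑ m ∈ Finset.Ico 1 M, G m
        = (∑ m ∈ Finset.Ico 1 (Q*k), G m) + ∑ m ∈ Finset.Ico (Q*k) M, G m :=
      (Finset.sum_Ico_consecutive _ (by omega) hQkM).symm
    have hs2 : ∑ m ∈ Finset.Ico 1 (Q*k), G m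
        = (∑ m ∈ Finset.Ico 1 k, G m) + ∑ m ∈ Finset.Ico k (Q*k), G m :=
      (Finset.sum_Ico_consecutive _ (by omega) hkQk).symm
    -- grid
    have hgrid : ∑ n ∈ Finset.Ico k (Q*k), G n
        = ∑ j ∈ Finset.range k, ∑ m ∈ Finset.Ico 1 Q, G (m*k + j) := by
      have h5 := sum_grid k hkpos G Q 1
      rw [one_mul] at h5
      rw [h5]
      exact Finset.sum_comm
    -- peel top j
    have hpeel : ∑ j ∈ Finset.range k, ∑ m ∈ Finset.Ico 1 Q, G (m*k + j)
        = (∑ j ∈ Finset.range (k-1), ∑ m ∈ Finset.Ico 1 Q, G (m*k + j))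
          + ∑ m ∈ Finset.Ico 1 Q, G (m*k + (k-1)) := by
      have h0 : k - 1 + 1 = k := by omega
      calc ∑ j ∈ Finset.range k, ∑ m ∈ Finset.Ico 1 Q, G (m*k + j)
          = ∑ j ∈ Finset.range ((k-1)+1), ∑ m ∈ Finset.Ico 1 Q, G (m*k + j) := by rw [h0]
        _ = _ := Finset.sum_range_succ (fun j => ∑ m ∈ Finset.Ico 1 Q, G (m*k + j)) (k-1)
    -- good j bound
    have hgood : ∀ j ∈ Finset.range (k-1),
        ‖∑ m ∈ Finset.Ico 1 Q, G (m*k + j)‖ ≤ (k:ℝ)/2 := by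
      intro j hj
      have hjlt : j < k - 1 := Finset.mem_range.mp hj
      have heq : ∀ m ∈ Finset.Ico 1 Q,
          G (m*k + j) = w h k (g (j+1) (m:ℤ) - g j (m:ℤ) + F j) := by
        intro m hm
        have hm1 : 1 ≤ m := (Finset.mem_Ico.mp hm).1
        have e1 : a (m*k + j + 1) = a m + g (j+1) (m:ℤ) := by
          have : m*k + j + 1 = m*k + (j+1) := by omega
          rw [this, ha m hm1 (j+1) (by omega)]
        have e2 : a (m*k + j) = a m + g j (m:ℤ) := ha m hm1 j (by omega)
        have e3 : F (m*k + j) = F j := per_mul k F hF m j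
        simp only [hG, e1, e2, e3]
        congr 1
        ring
      rw [Finset.sum_congr rfl heq]
      exact goodj_bound k hkpos g hg h hh1 hh2 j 1 one_pos (by omega) (F j) 1 Q
    have hsumgood : ‖∑ j ∈ Finset.range (k-1), ∑ m ∈ Finset.Ico 1 Q, G (m*k + j)‖
        ≤ ((k:ℝ) - 1) * ((k:ℝ)/2) := by
      have h1 : ‖∑ j ∈ Finset.range (k-1), ∑ m ∈ Finset.Ico 1 Q, G (m*k + j)‖
          ≤ ∑ j ∈ Finset.range (k-1), ‖∑ m ∈ Finset.Ico 1 Q, G (m*k + j)‖ := norm_sum_le _ _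
      refine h1.trans ?_
      have h2 : ∑ j ∈ Finset.range (k-1), ‖∑ m ∈ Finset.Ico 1 Q, G (m*k + j)‖
          ≤ ∑ j ∈ Finset.range (k-1), ((k:ℝ)/2) := by
        refine Finset.sum_le_sum (fun j hj => ?_)
        exact hgood j hj
      refine h2.trans ?_
      rw [Finset.sum_const, Finset.card_range, nsmul_eq_mul]
      have : ((k - 1 : ℕ) : ℝ) = (k:ℝ) - 1 := by
        have : (1:ℕ) ≤ k := by omega
        push_cast [Nat.cast_sub this]
        ring
      rw [this]
    -- bad j : recursion
    set F' : ℕ → ℤ := fun m => g 0 ((m:ℤ)+1) - g (k-1) (m:ℤ) + F (k-1) with hF'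
    have hF'per : ∀ n, F' (n + k) = F' n := by
      intro n
      simp only [hF']
      have c1 : ((n + k : ℕ) : ℤ) + 1 = ((n:ℤ)+1) + (k:ℤ) := by push_cast; ring
      have c2 : ((n + k : ℕ) : ℤ) = (n:ℤ) + (k:ℤ) := by push_cast; ring
      rw [c1, c2, hg.1, hg.1]
    have hbadeq : ∀ m ∈ Finset.Ico 1 Q,
        G (m*k + (k-1)) = w h k (a (m+1) - a m + F' m) := by
      intro m hm
      have hm1 : 1 ≤ m := (Finset.mem_Ico.mp hm).1
      have e0 : m*k + (k-1) + 1 = (m+1)*k + 0 := by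
        have h1 : (m+1)*k = m*k + k := by ring
        omega
      have e1 : a (m*k + (k-1) + 1) = a (m+1) + g 0 ((m:ℤ)+1) := by
        rw [e0, ha (m+1) (by omega) 0 hkpos]
        push_cast
        ring_nf
      have e2 : a (m*k + (k-1)) = a m + g (k-1) (m:ℤ) := ha m hm1 (k-1) (by omega)
      have e3 : F (m*k + (k-1)) = F (k-1) := per_mul k F hF m (k-1)
      simp only [hG, e1, e2, e3, hF']
      congr 1
      ring
    have hQle : Q ≤ k^(t+1) + 1 := by
      have h1 : Q < k^(t+1) + 1 := by
        rw [hQdef, Nat.div_lt_iff_lt_mul hkpos]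
        have h6 : (k^(t+1) + 1) * k = k^(t+2) + k := by ring
        have h7 : k^(t+1+1) = k^(t+2) := by ring_nf
        omega
      omega
    have hbad : ‖∑ m ∈ Finset.Ico 1 Q, G (m*k + (k-1))‖
        ≤ ((k:ℝ) * ((k:ℝ)+3)/2) * (t:ℝ) + (k:ℝ) := by
      rw [Finset.sum_congr rfl hbadeq]
      exact ih Q F' hF'per hQle
    -- boundary bounds
    have hhead : ‖∑ m ∈ Finset.Ico 1 k, G m‖ ≤ (k:ℝ) - 1 := by
      have h1 := hcard 1 k (fun n => a (n+1) - a n + F n)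
      have h2 : ((k - 1 : ℕ) : ℝ) = (k:ℝ) - 1 := by
        have : (1:ℕ) ≤ k := by omega
        push_cast [Nat.cast_sub this]; ring
      rw [h2] at h1
      exact h1
    have htail : ‖∑ m ∈ Finset.Ico (Q*k) M, G m‖ ≤ (k:ℝ) - 1 := by
      have h1 := hcard (Q*k) M (fun n => a (n+1) - a n + F n)
      refine h1.trans ?_
      have h3 : M - Q*k ≤ k - 1 := by omega
      have h4 : ((M - Q*k : ℕ) : ℝ) ≤ ((k - 1 : ℕ) : ℝ) := by exact_mod_cast h3
      refine h4.trans ?_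
      have h5 : (1:ℕ) ≤ k := by omega
      rw [Nat.cast_sub h5, Nat.cast_one]
    -- assemble
    have hmid : ‖∑ m ∈ Finset.Ico k (Q*k), G m‖
        ≤ ((k:ℝ) - 1) * ((k:ℝ)/2) + (((k:ℝ) * ((k:ℝ)+3)/2) * (t:ℝ) + (k:ℝ)) := by
      rw [hgrid, hpeel]
      exact (norm_add_le _ _).trans (add_le_add hsumgood hbad)
    calc ‖∑ m ∈ Finset.Ico 1 M, w h k (a (m+1) - a m + F m)‖
        = ‖(∑ m ∈ Finset.Ico 1 k, G m) + (∑ m ∈ Finset.Ico k (Q*k), G m)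
            + ∑ m ∈ Finset.Ico (Q*k) M, G m‖ := by rw [← hs2, ← hs1]
      _ ≤ ‖(∑ m ∈ Finset.Ico 1 k, G m) + (∑ m ∈ Finset.Ico k (Q*k), G m)‖
            + ‖∑ m ∈ Finset.Ico (Q*k) M, G m‖ := norm_add_le _ _
      _ ≤ (‖∑ m ∈ Finset.Ico 1 k, G m‖
            + ‖∑ m ∈ Finset.Ico k (Q*k), G m‖)
            + ‖∑ m ∈ Finset.Ico (Q*k) M, G m‖ := by
              exact add_le_add_left (norm_add_le (∑ m ∈ Finset.Ico 1 k, G m) (∑ m ∈ Finset.Ico k (Q*k), G m)) _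
      _ ≤ (((k:ℝ) - 1) + (((k:ℝ) - 1) * ((k:ℝ)/2) + (((k:ℝ) * ((k:ℝ)+3)/2) * (t:ℝ) + (k:ℝ))))
            + ((k:ℝ) - 1) := by
              exact add_le_add (add_le_add hhead hmid) htail
      _ ≤ ((k:ℝ) * ((k:ℝ)+3)/2) * ((t:ℝ)+1) + (k:ℝ) := by nlinarith
      _ = ((k:ℝ) * ((k:ℝ)+3)/2) * (((t+1 : ℕ)):ℝ) + (k:ℝ) := by norm_cast

lemma numeric1 (K I R : ℝ) (hK : 2 ≤ K) (hI1 : 1 ≤ I) (hIK : I ≤ K) (hR : 1 ≤ R) :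
    K + ((K - I) * (K/2) + I * ((K * (K+3)/2) * (R - 1) + K)) + (K - 1)
      ≤ K^2 * (K+3)/2 * (R-1) + K^2 + 2*K - 1 := by
  have hc1 : (0:ℝ) ≤ (K * (K+3)/2) * (R - 1) := by
    apply mul_nonneg
    · nlinarith
    · linarith
  have hc2 : I * ((K * (K+3)/2) * (R - 1)) ≤ K * ((K * (K+3)/2) * (R - 1)) :=
    mul_le_mul_of_nonneg_right hIK hc1
  nlinarith

lemma numeric2 (K R X : ℝ) (hK : 0 < K) (hR : 1 ≤ R) (hL : 0 < Real.log K)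
    (h1 : (R - 1) * Real.log K ≤ X) :
    K^2 * (K+3)/2 * (R-1) ≤ K^2 * (K+3) / (2 * Real.log K) * X := by
  have h2 : (R - 1) ≤ X / Real.log K := by
    rw [le_div_iff₀ hL]
    exact h1
  have hP : (0:ℝ) ≤ K^2 * (K+3)/2 := by nlinarith
  calc K^2 * (K+3)/2 * (R-1) ≤ K^2 * (K+3)/2 * (X / Real.log K) :=
        mul_le_mul_of_nonneg_left h2 hP
    _ = K^2 * (K+3) / (2 * Real.log K) * X := by
        field_simp

/-- For `k` prime, `g` admissible, `a(nk+j) = a(n) + g(j,n)`,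
`1 ≤ h ≤ k-1`, every `k`-periodic `f : ℕ → ℤ`, every `1 ≤ i ≤ k` and every `N > k`,
`|Σ_{n<N} e((h/k)(a(n+i) - a(n))) e((h/k) f(n))|
  ≤ (k²(k+3)/(2 log k)) log(N/k) + k² + 2k - 1`. -/
theorem gamma_small_shift_bound
    (k : ℕ) (hk : k.Prime) (g : ℕ → ℤ → ℤ) (hg : Admissible k g)
    (a : ℕ → ℤ)
    (ha : ∀ n : ℕ, 1 ≤ n → ∀ j : ℕ, j < k → a (n * k + j) = a n + g j (n : ℤ))
    (h : ℕ) (hh1 : 1 ≤ h) (hh2 : h ≤ k - 1)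
    (f : ℕ → ℤ) (hf : ∀ n, f (n + k) = f n)
    (i : ℕ) (hi1 : 1 ≤ i) (hi2 : i ≤ k)
    (N : ℕ) (hN : k < N) :
    ‖∑ n ∈ Finset.range N,
        e ((h : ℝ) / (k : ℝ) * ((a (n + i) - a n : ℤ) : ℝ))
          * e ((h : ℝ) / (k : ℝ) * ((f n : ℤ) : ℝ))‖
      ≤ (k : ℝ) ^ 2 * (k + 3) / (2 * Real.log k) * Real.log ((N : ℝ) / k)
        + (k : ℝ) ^ 2 + 2 * k - 1 := by
  have hk2 : 2 ≤ k := hk.two_le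
  have hkpos : 0 < k := by omega
  have hhlt : h < k := by omega
  have hKR : (2:ℝ) ≤ (k:ℝ) := by exact_mod_cast hk2
  have hIK : (i:ℝ) ≤ (k:ℝ) := by exact_mod_cast hi2
  have hI1 : (1:ℝ) ≤ (i:ℝ) := by exact_mod_cast hi1
  -- rewrite terms
  have hterm : ∀ n : ℕ,
      e ((h : ℝ) / (k : ℝ) * ((a (n + i) - a n : ℤ) : ℝ))
        * e ((h : ℝ) / (k : ℝ) * ((f n : ℤ) : ℝ))
      = w h k ((a (n + i) - a n) + f n) := by
    intro n
    rw [w_add]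
    rfl
  rw [Finset.sum_congr rfl (fun n _ => hterm n)]
  set W : ℕ → ℂ := fun n => w h k ((a (n + i) - a n) + f n) with hW
  -- scale parameter
  set r := Nat.log k N with hr
  have hr1 : 1 ≤ r := by
    rcases Nat.eq_zero_or_pos r with h0 | h0
    · exfalso
      rw [hr] at h0
      rcases (Nat.log_eq_zero_iff).mp h0 with h1 | h1 <;> omega
    · exact h0
  have hNlt : N < k^(r+1) := Nat.lt_pow_succ_log_self (by omega) N
  have hkrN : k^r ≤ N := Nat.pow_log_le_self k (by omega)
  -- card bound helper
  have hcard : ∀ (A B : ℕ),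
      ‖∑ m ∈ Finset.Ico A B, W m‖ ≤ ((B - A : ℕ) : ℝ) := by
    intro A B
    have := abs_sum_le_card (Finset.Ico A B) W (fun m => (abs_w _ _ _).le)
    simpa [Nat.card_Ico] using this
  set Q := N / k with hQdef
  have hQ1 : 1 ≤ Q := Nat.one_le_div_iff hkpos |>.mpr (by omega)
  have hQkN : Q * k ≤ N := Nat.div_mul_le_self N k
  have hkQk : k ≤ Q * k := by nlinarith
  have hmod : N - Q * k = N % k := by
    have h5 : Q * k + N % k = N := by
      rw [hQdef, Nat.mul_comm]; exact Nat.div_add_mod N k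
    omega
  have hmodlt : N % k < k := Nat.mod_lt _ hkpos
  -- decomposition
  have hs1 : ∑ n ∈ Finset.range N, W n
      = ((∑ n ∈ Finset.Ico 0 k, W n) + ∑ n ∈ Finset.Ico k (Q*k), W n)
        + ∑ n ∈ Finset.Ico (Q*k) N, W n := by
    rw [Finset.sum_Ico_consecutive W (by omega : 0 ≤ k) hkQk,
        Finset.sum_Ico_consecutive W (by omega : 0 ≤ Q*k) hQkN]
    rw [Finset.range_eq_Ico]
  have hgrid : ∑ n ∈ Finset.Ico k (Q*k), W n
      = ∑ j ∈ Finset.range k, ∑ m ∈ Finset.Ico 1 Q, W (m*k + j) := by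
    have h5 := sum_grid k hkpos W Q 1
    rw [one_mul] at h5
    rw [h5]
    exact Finset.sum_comm
  -- split good/bad j
  have hsplitj : ∑ j ∈ Finset.range k, ∑ m ∈ Finset.Ico 1 Q, W (m*k + j)
      = (∑ j ∈ Finset.Ico 0 (k-i), ∑ m ∈ Finset.Ico 1 Q, W (m*k + j))
        + ∑ j ∈ Finset.Ico (k-i) k, ∑ m ∈ Finset.Ico 1 Q, W (m*k + j) := by
    rw [Finset.sum_Ico_consecutive _ (by omega : 0 ≤ k - i) (by omega : k - i ≤ k)]
    rw [Finset.range_eq_Ico]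
  -- good j
  have hgood : ∀ j ∈ Finset.Ico 0 (k-i),
      ‖∑ m ∈ Finset.Ico 1 Q, W (m*k + j)‖ ≤ (k:ℝ)/2 := by
    intro j hj
    have hjlt : j < k - i := (Finset.mem_Ico.mp hj).2
    have heq : ∀ m ∈ Finset.Ico 1 Q,
        W (m*k + j) = w h k (g (j+i) (m:ℤ) - g j (m:ℤ) + f j) := by
      intro m hm
      have hm1 : 1 ≤ m := (Finset.mem_Ico.mp hm).1
      have e1 : a (m*k + j + i) = a m + g (j+i) (m:ℤ) := by
        have heq2 : m*k + j + i = m*k + (j+i) := by omega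
        rw [heq2, ha m hm1 (j+i) (by omega)]
      have e2 : a (m*k + j) = a m + g j (m:ℤ) := ha m hm1 j (by omega)
      have e3 : f (m*k + j) = f j := per_mul k f hf m j
      simp only [hW, e1, e2, e3]
      congr 1
      ring
    rw [Finset.sum_congr rfl heq]
    exact goodj_bound k hkpos g hg h hh1 hhlt j i (by omega) (by omega) (f j) 1 Q
  have hsumgood : ‖∑ j ∈ Finset.Ico 0 (k-i), ∑ m ∈ Finset.Ico 1 Q, W (m*k + j)‖
      ≤ ((k:ℝ) - (i:ℝ)) * ((k:ℝ)/2) := by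
    have h1 : ‖∑ j ∈ Finset.Ico 0 (k-i), ∑ m ∈ Finset.Ico 1 Q, W (m*k + j)‖
        ≤ ∑ j ∈ Finset.Ico 0 (k-i), ‖∑ m ∈ Finset.Ico 1 Q, W (m*k + j)‖ := norm_sum_le _ _
    refine h1.trans ?_
    have h2 : ∑ j ∈ Finset.Ico 0 (k-i), ‖∑ m ∈ Finset.Ico 1 Q, W (m*k + j)‖
        ≤ ∑ j ∈ Finset.Ico 0 (k-i), ((k:ℝ)/2) := by
      refine Finset.sum_le_sum (fun j hj => ?_)
      exact hgood j hj
    refine h2.trans ?_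
    rw [Finset.sum_const, Nat.card_Ico, nsmul_eq_mul]
    have h3 : ((k - i - 0 : ℕ) : ℝ) = (k:ℝ) - (i:ℝ) := by
      rw [Nat.sub_zero, Nat.cast_sub hi2]
    rw [h3]
  -- bad j
  have hbad : ∀ j ∈ Finset.Ico (k-i) k,
      ‖∑ m ∈ Finset.Ico 1 Q, W (m*k + j)‖
        ≤ ((k:ℝ) * ((k:ℝ)+3)/2) * (((r-1:ℕ)):ℝ) + (k:ℝ) := by
    intro j hj
    have hjmem := Finset.mem_Ico.mp hj
    have hjge : k - i ≤ j := hjmem.1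
    have hjlt : j < k := hjmem.2
    set j' := j + i - k with hj'
    have hj'lt : j' < k := by omega
    set F' : ℕ → ℤ := fun m => g j' ((m:ℤ)+1) - g j (m:ℤ) + f j with hF'
    have hF'per : ∀ n, F' (n + k) = F' n := by
      intro n
      simp only [hF']
      have c1 : ((n + k : ℕ) : ℤ) + 1 = ((n:ℤ)+1) + (k:ℤ) := by push_cast; ring
      have c2 : ((n + k : ℕ) : ℤ) = (n:ℤ) + (k:ℤ) := by push_cast; ring
      rw [c1, c2, hg.1, hg.1]
    have heq : ∀ m ∈ Finset.Ico 1 Q,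
        W (m*k + j) = w h k (a (m+1) - a m + F' m) := by
      intro m hm
      have hm1 : 1 ≤ m := (Finset.mem_Ico.mp hm).1
      have e0 : m*k + j + i = (m+1)*k + j' := by
        have h6 : (m+1)*k = m*k + k := by ring
        omega
      have e1 : a (m*k + j + i) = a (m+1) + g j' ((m:ℤ)+1) := by
        rw [e0, ha (m+1) (by omega) j' hj'lt]
        push_cast
        ring_nf
      have e2 : a (m*k + j) = a m + g j (m:ℤ) := ha m hm1 j hjlt
      have e3 : f (m*k + j) = f j := per_mul k f hf m j
      simp only [hW, e1, e2, e3, hF']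
      congr 1
      ring
    rw [Finset.sum_congr rfl heq]
    have hQle : Q ≤ k^((r-1)+1) + 1 := by
      have h7 : (r-1)+1 = r := by omega
      rw [h7]
      have h8 : Q < k^r + 1 := by
        rw [hQdef, Nat.div_lt_iff_lt_mul hkpos]
        have h9 : (k^r + 1) * k = k^(r+1) + k := by ring
        omega
      omega
    exact Tbound k hk2 g hg a ha h hh1 hhlt (r-1) Q F' hF'per hQle
  have hsumbad : ‖∑ j ∈ Finset.Ico (k-i) k, ∑ m ∈ Finset.Ico 1 Q, W (m*k + j)‖
      ≤ (i:ℝ) * (((k:ℝ) * ((k:ℝ)+3)/2) * (((r-1:ℕ)):ℝ) + (k:ℝ)) := by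
    have h1 : ‖∑ j ∈ Finset.Ico (k-i) k, ∑ m ∈ Finset.Ico 1 Q, W (m*k + j)‖
        ≤ ∑ j ∈ Finset.Ico (k-i) k, ‖∑ m ∈ Finset.Ico 1 Q, W (m*k + j)‖ := norm_sum_le _ _
    refine h1.trans ?_
    have h2 : ∑ j ∈ Finset.Ico (k-i) k, ‖∑ m ∈ Finset.Ico 1 Q, W (m*k + j)‖
        ≤ ∑ j ∈ Finset.Ico (k-i) k, (((k:ℝ) * ((k:ℝ)+3)/2) * (((r-1:ℕ)):ℝ) + (k:ℝ)) := by
      refine Finset.sum_le_sum (fun j hj => ?_)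
      exact hbad j hj
    refine h2.trans ?_
    rw [Finset.sum_const, Nat.card_Ico, nsmul_eq_mul]
    have h3 : ((k - (k - i) : ℕ) : ℝ) = (i:ℝ) := by
      have : k - (k - i) = i := by omega
      rw [this]
    rw [h3]
  -- head and tail
  have hhead : ‖∑ n ∈ Finset.Ico 0 k, W n‖ ≤ (k:ℝ) := by
    have h1 := hcard 0 k
    simpa using h1
  have htail : ‖∑ n ∈ Finset.Ico (Q*k) N, W n‖ ≤ (k:ℝ) - 1 := by
    have h1 := hcard (Q*k) N
    refine h1.trans ?_
    have h3 : N - Q*k ≤ k - 1 := by omega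
    have h4 : ((N - Q*k : ℕ) : ℝ) ≤ ((k - 1 : ℕ) : ℝ) := by exact_mod_cast h3
    refine h4.trans ?_
    have h5 : (1:ℕ) ≤ k := by omega
    rw [Nat.cast_sub h5, Nat.cast_one]
  -- cast of r-1
  have hrcast : (((r-1:ℕ)):ℝ) = (r:ℝ) - 1 := by
    have : (1:ℕ) ≤ r := hr1
    push_cast [Nat.cast_sub this]
    ring
  -- combine into intermediate bound
  have hcomb : ‖∑ n ∈ Finset.range N, W n‖
      ≤ (k:ℝ) + (((k:ℝ) - (i:ℝ)) * ((k:ℝ)/2)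
          + (i:ℝ) * (((k:ℝ) * ((k:ℝ)+3)/2) * ((r:ℝ) - 1) + (k:ℝ)))
        + ((k:ℝ) - 1) := by
    rw [hs1]
    refine (norm_add_le _ _).trans ?_
    refine add_le_add ?_ htail
    refine (norm_add_le _ _).trans ?_
    refine add_le_add hhead ?_
    rw [hgrid, hsplitj]
    refine (norm_add_le _ _).trans ?_
    rw [← hrcast]
    exact add_le_add hsumgood hsumbad
  refine hcomb.trans ?_
  -- final numeric estimates
  have hlogk : (0:ℝ) < Real.log k := Real.log_pos (by exact_mod_cast hk.one_lt)
  have hNpos : (0:ℝ) < (N:ℝ) := by exact_mod_cast (by omega : 0 < N)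
  have hlogN : (r:ℝ) * Real.log k ≤ Real.log N := by
    have h1 : ((k^r : ℕ) : ℝ) ≤ (N:ℝ) := by exact_mod_cast hkrN
    have h2 : Real.log ((k:ℝ)^r) ≤ Real.log N := by
      apply Real.log_le_log (by positivity)
      push_cast at h1 ⊢
      exact h1
    rwa [Real.log_pow] at h2
  have hR1 : (1:ℝ) ≤ (r:ℝ) := by exact_mod_cast hr1
  have hstep1 := numeric1 (k:ℝ) (i:ℝ) (r:ℝ) hKR hI1 hIK hR1
  refine hstep1.trans ?_
  have hlogdiv : Real.log ((N:ℝ)/(k:ℝ)) = Real.log N - Real.log k :=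
    Real.log_div (ne_of_gt hNpos) (by positivity)
  have h1 : ((r:ℝ) - 1) * Real.log k ≤ Real.log ((N:ℝ)/(k:ℝ)) := by
    rw [hlogdiv]
    nlinarith [hlogN, hlogk]
  have hstep2 := numeric2 (k:ℝ) (r:ℝ) (Real.log ((N:ℝ)/(k:ℝ)))
    (by positivity) hR1 hlogk h1
  linarith [hstep2]
end

section
/- Let k be a prime and let (â(n))_{n≥0} be a generalized Rudin-Shapiro sequence over {0,1,…,k−1} with admissible function g. Then inf_{r > 0} C_{(0,r)} = 1 − 1/k, where C_{(0,r)} = liminf_{N→∞} (1/N) Σ_{n<N} δ(n, n+r). -/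
open Finset Filter Real
open Topology

/-- `(â(n))` is a generalized Rudin–Shapiro sequence over `{0,…,k-1}` (with companion
integer sequence `a` and admissible function `g`). -/
def IsGenRudinShapiro (k : ℕ) (g : ℕ → ℤ → ℤ) (a : ℕ → ℤ) (ahat : ℕ → ℕ) : Prop :=
  (∀ n, ahat n < k) ∧
  (∀ n, ((ahat n : ℤ)) % (k : ℤ) = a n % (k : ℤ)) ∧
  (∀ n : ℕ, 1 ≤ n → ∀ j : ℕ, j < k → a (n * k + j) = a n + g j (n : ℤ))

namespace GRSAux

variable (k : ℕ) (g : ℕ → ℤ → ℤ) (a : ℕ → ℤ)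

/-- the difference sequence, in `ZMod k` -/
def d (e n : ℕ) : ZMod k := ((a (n + e) : ZMod k)) - ((a n : ZMod k))

/-- the `g`-correction term appearing in the carry recursion -/
def H (e c c' : ℕ) : ZMod k :=
  ((g ((c + e) % k) ((c' : ℤ) + ((c + e) / k : ℕ)) - g c (c' : ℤ) : ℤ) : ZMod k)

/-- count of `n` in the aligned block `[q k^s, (q+1) k^s)` with `n ≡ c [k]` and
`d e n = t` -/
def Gc (s q e c : ℕ) (t : ZMod k) : ℕ :=
  ((Finset.Ico (q * k ^ s) ((q + 1) * k ^ s)).filter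
    (fun n => n % k = c ∧ d k a e n = t)).card

variable {k g a}

lemma gper (hg : Admissible k g) (j : ℕ) (z : ℤ) (i : ℕ) :
    g j (z + i * k) = g j z := by
  induction i with
  | zero => simp
  | succ i ih =>
      have : z + ((i : ℤ) + 1) * k = (z + i * k) + k := by ring
      rw [Nat.cast_succ, this, hg.1, ih]

lemma gshift (hg : Admissible k g) (j : ℕ) (m : ℕ) (w : ℤ) :
    g j ((m : ℤ) + w) = g j ((m % k : ℕ) + w) := by
  have h : (m : ℤ) = ((m % k : ℕ) : ℤ) + (m / k : ℕ) * k := by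
    exact_mod_cast (Nat.mod_add_div' m k).symm
  conv_lhs => rw [show (m : ℤ) + w = (((m % k : ℕ) : ℤ) + w) + (m / k : ℕ) * k by
    rw [h]; ring]
  exact gper hg j _ _

lemma gmod (hg : Admissible k g) (j : ℕ) (m : ℕ) :
    g j (m : ℤ) = g j ((m % k : ℕ) : ℤ) := by
  have := gshift hg j m 0
  simpa using this


lemma dstep (hg : Admissible k g) (ha : ∀ n : ℕ, 1 ≤ n → ∀ j : ℕ, j < k → a (n * k + j) = a n + g j (n : ℤ))
    (hk : 0 < k) (e m c : ℕ) (hm : 1 ≤ m) (hc : c < k) :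
    d k a e (m * k + c) = d k a ((c + e) / k) m + H k g e c (m % k) := by
  have h1 : m * k + c + e = (m + (c + e) / k) * k + (c + e) % k := by
    have := Nat.div_add_mod (c + e) k
    ring_nf
    omega
  have h2 : a (m * k + c + e) = a (m + (c + e) / k) + g ((c + e) % k) ((m : ℤ) + ((c + e) / k : ℕ)) := by
    rw [h1, ha (m + (c + e) / k) (le_trans hm (Nat.le_add_right _ _)) _ (Nat.mod_lt _ hk)]
    push_cast
    ring_nf
  have h3 : a (m * k + c) = a m + g c (m : ℤ) := ha m hm c hc
  unfold GRSAux.d GRSAux.H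
  rw [h2, h3, gshift hg _ m _, gmod hg c m]
  push_cast
  ring

/-- reindexing an aligned block along a fixed residue -/
lemma card_mod_filter (hk : 0 < k) (A B c : ℕ) (hc : c < k) (P : ℕ → Prop) [DecidablePred P] :
    ((Finset.Ico (A * k) (B * k)).filter (fun n => n % k = c ∧ P n)).card
      = ((Finset.Ico A B).filter (fun m => P (m * k + c))).card := by
  apply Finset.card_nbij' (i := fun n => n / k) (j := fun m => m * k + c)
  · intro n hn
    simp only [Finset.mem_coe, Finset.mem_filter, Finset.mem_Ico] at hn ⊢
    obtain ⟨⟨h1, h2⟩, h3, h4⟩ := hn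
    refine ⟨⟨?_, ?_⟩, ?_⟩
    · exact Nat.le_div_iff_mul_le hk |>.2 h1
    · exact Nat.div_lt_iff_lt_mul hk |>.2 h2
    · have h5 : n / k * k = k * (n / k) := Nat.mul_comm _ _
      have h6 := Nat.div_add_mod n k
      have : n / k * k + c = n := by omega
      rwa [this]
  · intro m hm
    simp only [Finset.mem_coe, Finset.mem_filter, Finset.mem_Ico] at hm ⊢
    obtain ⟨⟨h1, h2⟩, h3⟩ := hm
    refine ⟨⟨?_, ?_⟩, ?_, h3⟩
    · calc A * k ≤ m * k := Nat.mul_le_mul_right k h1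
        _ ≤ m * k + c := Nat.le_add_right _ _
    · have h4 : (m + 1) * k ≤ B * k := Nat.mul_le_mul_right k h2
      nlinarith
    · rw [Nat.add_comm, Nat.add_mul_mod_self_right]; exact Nat.mod_eq_of_lt hc
  · intro n hn
    simp only [Finset.mem_coe, Finset.mem_filter] at hn ⊢
    have := Nat.div_add_mod n k
    have h3 := hn.2.1
    have h5 : n / k * k = k * (n / k) := Nat.mul_comm _ _
    omega
  · intro m hm
    show (m * k + c) / k = m
    rw [Nat.add_comm, Nat.add_mul_div_right _ _ hk, Nat.div_eq_of_lt hc, Nat.zero_add]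


lemma pow_split (hs : 1 ≤ s) : k ^ s = k ^ (s - 1) * k := by
  rw [← pow_succ]; congr 1; omega

lemma Gstep (hg : Admissible k g)
    (ha : ∀ n : ℕ, 1 ≤ n → ∀ j : ℕ, j < k → a (n * k + j) = a n + g j (n : ℤ))
    (hk : 0 < k) (s q e c : ℕ) (hs : 1 ≤ s) (hq : 1 ≤ q) (hc : c < k) (t : ZMod k) :
    Gc k a s q e c t
      = ((Finset.Ico (q * k ^ (s - 1)) ((q + 1) * k ^ (s - 1))).filter
          (fun m => d k a ((c + e) / k) m + H k g e c (m % k) = t)).card := by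
  unfold GRSAux.Gc
  rw [pow_split hs, ← Nat.mul_assoc, ← Nat.mul_assoc,
    card_mod_filter hk _ _ c hc (fun n => d k a e n = t)]
  apply Finset.card_bij (fun m _ => m)
  · intro m hm
    simp only [Finset.mem_filter, Finset.mem_Ico] at hm ⊢
    refine ⟨hm.1, ?_⟩
    have hm1 : 1 ≤ m := by
      have := hm.1.1
      have hpow : 1 ≤ q * k ^ (s - 1) := Nat.one_le_iff_ne_zero.2 (by positivity)
      omega
    rw [← dstep hg ha hk e m c hm1 hc]
    exact hm.2
  · intro x hx y hy h; exact h
  · intro m hm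
    refine ⟨m, ?_, rfl⟩
    simp only [Finset.mem_filter, Finset.mem_Ico] at hm ⊢
    refine ⟨hm.1, ?_⟩
    have hm1 : 1 ≤ m := by
      have := hm.1.1
      have hpow : 1 ≤ q * k ^ (s - 1) := Nat.one_le_iff_ne_zero.2 (by positivity)
      omega
    rw [dstep hg ha hk e m c hm1 hc]
    exact hm.2

lemma fiber_split (hk : 0 < k) (S : Finset ℕ) (P : ℕ → Prop) [DecidablePred P] :
    (S.filter P).card
      = ∑ c' ∈ Finset.range k, (S.filter (fun m => m % k = c' ∧ P m)).card := by
  rw [Finset.card_eq_sum_card_fiberwise (f := fun m => m % k) (t := Finset.range k)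
    (fun x _ => Finset.mem_range.2 (Nat.mod_lt _ hk))]
  apply Finset.sum_congr rfl
  intro c' _
  rw [Finset.filter_filter]
  congr 1
  ext x
  simp only [Finset.mem_filter]
  tauto

lemma GcCarry (hg : Admissible k g)
    (ha : ∀ n : ℕ, 1 ≤ n → ∀ j : ℕ, j < k → a (n * k + j) = a n + g j (n : ℤ))
    (hk : 0 < k) (s q e c : ℕ) (hs : 1 ≤ s) (hq : 1 ≤ q) (hc : c < k) (t : ZMod k) :
    Gc k a s q e c t
      = ∑ c' ∈ Finset.range k, Gc k a (s - 1) q ((c + e) / k) c' (t - H k g e c c') := by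
  rw [Gstep hg ha hk s q e c hs hq hc t,
    fiber_split hk _ (fun m => d k a ((c + e) / k) m + H k g e c (m % k) = t)]
  apply Finset.sum_congr rfl
  intro c' _
  unfold GRSAux.Gc
  congr 1
  apply Finset.filter_congr
  intro m _
  constructor
  · rintro ⟨h1, h2⟩; rw [h1] at h2; exact ⟨h1, by rw [eq_sub_iff_add_eq]; exact h2⟩
  · rintro ⟨h1, h2⟩; rw [eq_sub_iff_add_eq] at h2; exact ⟨h1, by rw [h1]; exact h2⟩

lemma ap_count (hk : 0 < k) (A B c : ℕ) (hc : c < k) :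
    ((Finset.Ico (A * k) (B * k)).filter (fun n => n % k = c)).card = B - A := by
  have : ((Finset.Ico (A * k) (B * k)).filter (fun n => n % k = c))
      = ((Finset.Ico (A * k) (B * k)).filter (fun n => n % k = c ∧ (fun _ => True) n)) := by
    simp
  rw [this, card_mod_filter hk A B c hc (fun _ => True)]
  simp [Nat.card_Ico]

lemma d_zero (n : ℕ) : d k a 0 n = 0 := by
  unfold GRSAux.d; rw [Nat.add_zero, sub_self]

lemma uniqueCount (hg : Admissible k g) (hk : 0 < k) (e c : ℕ) (he : 0 < e)
    (hce : c + e ≤ k - 1) (t : ZMod k) :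
    ((Finset.range k).filter
      (fun c' : ℕ => ((g (c + e) (c' : ℤ) - g c (c' : ℤ) : ℤ) : ZMod k) = t)).card = 1 := by
  haveI : NeZero k := ⟨hk.ne'⟩
  set f : Fin k → ZMod k :=
    fun x => ((g (c + e) (x.val : ℤ) - g c (x.val : ℤ) : ℤ) : ZMod k) with hf
  have hsurj : Function.Surjective f := by
    intro u
    obtain ⟨n, hn, hmod⟩ := hg.2 c e he hce u.val (ZMod.val_lt u)
    refine ⟨⟨n, hn⟩, ?_⟩
    have h1 : ((g (c + e) (n : ℤ) - g c (n : ℤ) : ℤ) : ZMod k)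
        = (((u.val : ℕ) : ℤ) : ZMod k) := by
      rw [ZMod.intCast_eq_intCast_iff]
      unfold Int.ModEq
      rw [hmod]
      rw [Int.emod_eq_of_lt (by positivity) (by exact_mod_cast ZMod.val_lt u)]
    simpa [hf, ZMod.natCast_val, ZMod.cast_id] using h1
  have hbij : Function.Bijective f := by
    rw [Fintype.bijective_iff_surjective_and_card]
    exact ⟨hsurj, by simp [ZMod.card]⟩
  obtain ⟨x, hx⟩ := hsurj t
  rw [Finset.card_eq_one]
  refine ⟨x.val, ?_⟩
  ext y
  simp only [Finset.mem_filter, Finset.mem_range, Finset.mem_singleton]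
  constructor
  · rintro ⟨hy, hyt⟩
    have : f ⟨y, hy⟩ = f x := by rw [hx]; exact hyt
    have := hbij.1 this
    exact congrArg Fin.val this
  · rintro rfl
    exact ⟨x.isLt, hx⟩


lemma Gc_zero (hk : 0 < k) (s q c : ℕ) (hs : 1 ≤ s) (hc : c < k) (t : ZMod k) :
    Gc k a s q 0 c t = if t = 0 then k ^ (s - 1) else 0 := by
  unfold GRSAux.Gc
  by_cases ht : t = 0
  · rw [if_pos ht]
    have hfe : ((Finset.Ico (q * k ^ s) ((q + 1) * k ^ s)).filter
        (fun n => n % k = c ∧ d k a 0 n = t))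
        = ((Finset.Ico (q * k ^ s) ((q + 1) * k ^ s)).filter (fun n => n % k = c)) := by
      apply Finset.filter_congr
      intro n _
      simp [d_zero, ht]
    rw [hfe, pow_split hs, ← Nat.mul_assoc, ← Nat.mul_assoc,
      ap_count hk _ _ c hc]
    have : (q + 1) * k ^ (s - 1) = q * k ^ (s - 1) + k ^ (s - 1) := by ring
    omega
  · rw [if_neg ht]
    rw [Finset.card_eq_zero, Finset.filter_eq_empty_iff]
    intro n _
    rw [d_zero]
    tauto

lemma Gc_le (hk : 0 < k) (s q e c : ℕ) (hs : 1 ≤ s) (hc : c < k) (t : ZMod k) :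
    Gc k a s q e c t ≤ k ^ (s - 1) := by
  unfold GRSAux.Gc
  calc ((Finset.Ico (q * k ^ s) ((q + 1) * k ^ s)).filter
        (fun n => n % k = c ∧ d k a e n = t)).card
      ≤ ((Finset.Ico (q * k ^ s) ((q + 1) * k ^ s)).filter (fun n => n % k = c)).card := by
        apply Finset.card_le_card
        intro x hx
        simp only [Finset.mem_filter] at hx ⊢
        tauto
    _ = k ^ (s - 1) := by
        rw [pow_split hs, ← Nat.mul_assoc, ← Nat.mul_assoc, ap_count hk _ _ c hc]
        have : (q + 1) * k ^ (s - 1) = q * k ^ (s - 1) + k ^ (s - 1) := by ring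
        omega

lemma GcExact (hg : Admissible k g)
    (ha : ∀ n : ℕ, 1 ≤ n → ∀ j : ℕ, j < k → a (n * k + j) = a n + g j (n : ℤ))
    (hk : 0 < k) (s q e c : ℕ) (hs : 2 ≤ s) (hq : 1 ≤ q) (he : 0 < e)
    (hce : c + e ≤ k - 1) (t : ZMod k) :
    Gc k a s q e c t = k ^ (s - 2) := by
  have hc : c < k := by omega
  have hcek : c + e < k := by omega
  rw [GcCarry hg ha hk s q e c (by omega) hq hc t]
  have hdiv : (c + e) / k = 0 := Nat.div_eq_of_lt hcek
  have hmod : (c + e) % k = c + e := Nat.mod_eq_of_lt hcek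
  have hH : ∀ c' : ℕ, H k g e c c'
      = ((g (c + e) (c' : ℤ) - g c (c' : ℤ) : ℤ) : ZMod k) := by
    intro c'
    unfold GRSAux.H
    rw [hdiv, hmod]
    norm_num
  calc (∑ c' ∈ Finset.range k, Gc k a (s - 1) q ((c + e) / k) c' (t - H k g e c c'))
      = ∑ c' ∈ Finset.range k,
          (if ((g (c + e) (c' : ℤ) - g c (c' : ℤ) : ℤ) : ZMod k) = t
            then k ^ (s - 2) else 0) := by
        apply Finset.sum_congr rfl
        intro c' hc'
        rw [hdiv, Gc_zero hk (s - 1) q c' (by omega) (Finset.mem_range.1 hc') _]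
        have : (t - H k g e c c' = 0)
            ↔ (((g (c + e) (c' : ℤ) - g c (c' : ℤ) : ℤ) : ZMod k) = t) := by
          rw [sub_eq_zero, hH c', eq_comm]
        have hss : s - 1 - 1 = s - 2 := by omega
        rw [hss]
        by_cases hcond : ((g (c + e) (c' : ℤ) - g c (c' : ℤ) : ℤ) : ZMod k) = t
        · rw [if_pos (this.2 hcond), if_pos hcond]
        · rw [if_neg (fun h => hcond (this.1 h)), if_neg hcond]
    _ = ((Finset.range k).filter
          (fun c' : ℕ => ((g (c + e) (c' : ℤ) - g c (c' : ℤ) : ℤ) : ZMod k) = t)).card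
          * k ^ (s - 2) := by
        rw [← Finset.sum_filter, Finset.sum_const, smul_eq_mul]
    _ = k ^ (s - 2) := by
        rw [uniqueCount hg hk e c he hce t, one_mul]


lemma LemA (hg : Admissible k g)
    (ha : ∀ n : ℕ, 1 ≤ n → ∀ j : ℕ, j < k → a (n * k + j) = a n + g j (n : ℤ))
    (hk2 : 2 ≤ k) :
    ∀ e, 1 ≤ e → ∀ s, e + 1 ≤ s → ∀ q c, 1 ≤ q → c < k → ∀ t : ZMod k,
      Gc k a s q e c t ≤ k ^ (s - 2) + (k + 1) * k ^ (e - 1) ∧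
      k ^ (s - 2) ≤ Gc k a s q e c t + (k + 1) * k ^ (e - 1) := by
  have hk : 0 < k := by omega
  intro e
  induction e using Nat.strong_induction_on with
  | _ e IH =>
    intro he s
    by_cases he1 : e = 1
    · subst he1
      -- inner induction on s
      induction s using Nat.strong_induction_on with
      | _ s IHs =>
        intro hs q c hq hc t
        by_cases hce : c + 1 ≤ k - 1
        · rw [GcExact hg ha hk s q 1 c hs hq (by omega) hce t]
          omega
        · have hc1 : c = k - 1 := by omega
          by_cases hs2 : s = 2
          · subst hs2
            have h1 := Gc_le (a := a) hk 2 q 1 c (by omega) hc t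
            have h2 : k ^ (2 - 1) = k := by norm_num
            have h3 : (k : ℕ) ^ (2 - 2) = 1 := by norm_num
            have h4 : (k + 1) * k ^ (1 - 1) = k + 1 := by norm_num
            omega
          · have hs3 : 3 ≤ s := by omega
            rw [GcCarry hg ha hk s q 1 c (by omega) hq hc t]
            have hck : c + 1 = k := by omega
            have hdiv : (c + 1) / k = 1 := by rw [hck, Nat.div_self hk]
            rw [hdiv]
            have hsplit : (∑ c' ∈ Finset.range k,
                Gc k a (s - 1) q 1 c' (t - H k g 1 c c'))
                = (∑ c' ∈ Finset.range (k - 1),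
                    Gc k a (s - 1) q 1 c' (t - H k g 1 c c'))
                  + Gc k a (s - 1) q 1 (k - 1) (t - H k g 1 c (k - 1)) := by
              have h := Finset.sum_range_succ
                (fun c' => Gc k a (s - 1) q 1 c' (t - H k g 1 c c')) (k - 1)
              rw [Nat.sub_add_cancel (by omega : 1 ≤ k)] at h
              exact h
            have hexact : (∑ c' ∈ Finset.range (k - 1),
                Gc k a (s - 1) q 1 c' (t - H k g 1 c c'))
                = (k - 1) * k ^ (s - 3) := by
              have h1 : ∀ c' ∈ Finset.range (k - 1),
                  Gc k a (s - 1) q 1 c' (t - H k g 1 c c') = k ^ (s - 3) := by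
                intro c' hc'
                have hc'k : c' + 1 ≤ k - 1 := by
                  have := Finset.mem_range.1 hc'; omega
                rw [GcExact hg ha hk (s - 1) q 1 c' (by omega) hq (by omega) hc'k _]
                have h2 : s - 1 - 2 = s - 3 := by omega
                rw [h2]
              rw [Finset.sum_congr rfl h1, Finset.sum_const, smul_eq_mul, Finset.card_range]
            have hIH := IHs (s - 1) (by omega) (by omega) q (k - 1) hq (by omega)
              (t - H k g 1 c (k - 1))
            have hss : s - 1 - 2 = s - 3 := by omega
            rw [hss] at hIH
            have hA : (k - 1) * k ^ (s - 3) + k ^ (s - 3) = k ^ (s - 2) := by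
              have h1 : (k - 1) + 1 = k := by omega
              have h2 : k * k ^ (s - 3) = k ^ (s - 2) := by
                rw [← pow_succ']; congr 1; omega
              calc (k - 1) * k ^ (s - 3) + k ^ (s - 3)
                  = ((k - 1) + 1) * k ^ (s - 3) := by ring
                _ = k * k ^ (s - 3) := by rw [h1]
                _ = k ^ (s - 2) := h2
            rw [hsplit, hexact]
            omega
    · -- e ≥ 2
      have he2 : 2 ≤ e := by omega
      intro hs q c hq hc t
      by_cases hce : c + e ≤ k - 1
      · rw [GcExact hg ha hk s q e c (by omega) hq (by omega) hce t]
        omega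
      · have hcek : k ≤ c + e := by omega
        rw [GcCarry hg ha hk s q e c (by omega) hq hc t]
        set e₁ := (c + e) / k with he₁
        have he₁1 : 1 ≤ e₁ := by
          rw [he₁]
          exact (Nat.one_le_div_iff hk).2 hcek
        have he₁lt : e₁ < e := by
          rw [he₁]
          apply Nat.div_lt_iff_lt_mul hk |>.2
          nlinarith
        -- bounds from strong IH
        have hbound : ∀ c' ∈ Finset.range k,
            Gc k a (s - 1) q e₁ c' (t - H k g e c c') ≤ k ^ (s - 3) + (k + 1) * k ^ (e - 2) ∧
            k ^ (s - 3) ≤ Gc k a (s - 1) q e₁ c' (t - H k g e c c') + (k + 1) * k ^ (e - 2) := by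
          intro c' hc'
          have h := IH e₁ he₁lt he₁1 (s - 1) (by omega) q c' hq (Finset.mem_range.1 hc')
            (t - H k g e c c')
          have hss : s - 1 - 2 = s - 3 := by omega
          rw [hss] at h
          have hmono : (k + 1) * k ^ (e₁ - 1) ≤ (k + 1) * k ^ (e - 2) := by
            apply Nat.mul_le_mul_left
            exact Nat.pow_le_pow_right (by omega) (by omega)
          omega
        have hub : (∑ c' ∈ Finset.range k, Gc k a (s - 1) q e₁ c' (t - H k g e c c'))
            ≤ k * (k ^ (s - 3) + (k + 1) * k ^ (e - 2)) := by
          calc (∑ c' ∈ Finset.range k, Gc k a (s - 1) q e₁ c' (t - H k g e c c'))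
              ≤ ∑ _c' ∈ Finset.range k, (k ^ (s - 3) + (k + 1) * k ^ (e - 2)) :=
                Finset.sum_le_sum (fun c' hc' => (hbound c' hc').1)
            _ = k * (k ^ (s - 3) + (k + 1) * k ^ (e - 2)) := by
                rw [Finset.sum_const, smul_eq_mul, Finset.card_range]
        have hlb : k * k ^ (s - 3)
            ≤ (∑ c' ∈ Finset.range k, Gc k a (s - 1) q e₁ c' (t - H k g e c c'))
              + k * ((k + 1) * k ^ (e - 2)) := by
          calc k * k ^ (s - 3) = ∑ _c' ∈ Finset.range k, k ^ (s - 3) := by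
                rw [Finset.sum_const, smul_eq_mul, Finset.card_range]
            _ ≤ ∑ c' ∈ Finset.range k,
                (Gc k a (s - 1) q e₁ c' (t - H k g e c c') + (k + 1) * k ^ (e - 2)) :=
                Finset.sum_le_sum (fun c' hc' => (hbound c' hc').2)
            _ = (∑ c' ∈ Finset.range k, Gc k a (s - 1) q e₁ c' (t - H k g e c c'))
                + k * ((k + 1) * k ^ (e - 2)) := by
                rw [Finset.sum_add_distrib, Finset.sum_const, smul_eq_mul, Finset.card_range]
        have hpow1 : k * k ^ (s - 3) = k ^ (s - 2) := by
          rw [← pow_succ']; congr 1; omega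
        have hpow2 : k * ((k + 1) * k ^ (e - 2)) = (k + 1) * k ^ (e - 1) := by
          rw [show (k + 1) * k ^ (e - 1) = (k + 1) * (k * k ^ (e - 2)) by
            rw [← pow_succ']; congr 2; omega]
          ring
        constructor
        · calc (∑ c' ∈ Finset.range k, Gc k a (s - 1) q e₁ c' (t - H k g e c c'))
              ≤ k * (k ^ (s - 3) + (k + 1) * k ^ (e - 2)) := hub
            _ = k ^ (s - 2) + (k + 1) * k ^ (e - 1) := by
                rw [Nat.mul_add, hpow1, hpow2]
        · calc k ^ (s - 2) = k * k ^ (s - 3) := hpow1.symm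
            _ ≤ (∑ c' ∈ Finset.range k, Gc k a (s - 1) q e₁ c' (t - H k g e c c'))
                + k * ((k + 1) * k ^ (e - 2)) := hlb
            _ = (∑ c' ∈ Finset.range k, Gc k a (s - 1) q e₁ c' (t - H k g e c c'))
                + (k + 1) * k ^ (e - 1) := by rw [hpow2]


variable (k a) in
/-- number of `n < N` with `d e n = t` -/
def E (N e : ℕ) (t : ZMod k) : ℕ :=
  ((Finset.range N).filter (fun n => d k a e n = t)).card

variable (k a) in
def Fb (s q e : ℕ) (t : ZMod k) : ℕ :=
  ((Finset.Ico (q * k ^ s) ((q + 1) * k ^ s)).filter (fun n => d k a e n = t)).card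

lemma Fb_eq_sum (hk : 0 < k) (s q e : ℕ) (t : ZMod k) :
    Fb k a s q e t = ∑ c ∈ Finset.range k, Gc k a s q e c t :=
  fiber_split hk _ _

lemma Fb_bounds (hg : Admissible k g)
    (ha : ∀ n : ℕ, 1 ≤ n → ∀ j : ℕ, j < k → a (n * k + j) = a n + g j (n : ℤ))
    (hk2 : 2 ≤ k) (s q e : ℕ) (he : 1 ≤ e) (hs : e + 1 ≤ s) (hq : 1 ≤ q) (t : ZMod k) :
    Fb k a s q e t ≤ k ^ (s - 1) + (k + 1) * k ^ e ∧
      k ^ (s - 1) ≤ Fb k a s q e t + (k + 1) * k ^ e := by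
  have hk : 0 < k := by omega
  rw [Fb_eq_sum hk]
  have hb : ∀ c ∈ Finset.range k,
      Gc k a s q e c t ≤ k ^ (s - 2) + (k + 1) * k ^ (e - 1) ∧
      k ^ (s - 2) ≤ Gc k a s q e c t + (k + 1) * k ^ (e - 1) := fun c hc =>
    LemA hg ha hk2 e he s hs q c hq (Finset.mem_range.1 hc) t
  have h1 : k * k ^ (s - 2) = k ^ (s - 1) := by
    rw [← pow_succ']; congr 1; omega
  have h2 : k * ((k + 1) * k ^ (e - 1)) = (k + 1) * k ^ e := by
    rw [show (k + 1) * k ^ e = (k + 1) * (k * k ^ (e - 1)) by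
      rw [← pow_succ']; congr 2; omega]
    ring
  constructor
  · calc (∑ c ∈ Finset.range k, Gc k a s q e c t)
        ≤ ∑ _c ∈ Finset.range k, (k ^ (s - 2) + (k + 1) * k ^ (e - 1)) :=
          Finset.sum_le_sum (fun c hc => (hb c hc).1)
      _ = k * (k ^ (s - 2) + (k + 1) * k ^ (e - 1)) := by
          rw [Finset.sum_const, smul_eq_mul, Finset.card_range]
      _ = k ^ (s - 1) + (k + 1) * k ^ e := by rw [Nat.mul_add, h1, h2]
  · calc k ^ (s - 1) = k * k ^ (s - 2) := h1.symm
      _ = ∑ _c ∈ Finset.range k, k ^ (s - 2) := by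
          rw [Finset.sum_const, smul_eq_mul, Finset.card_range]
      _ ≤ ∑ c ∈ Finset.range k, (Gc k a s q e c t + (k + 1) * k ^ (e - 1)) :=
          Finset.sum_le_sum (fun c hc => (hb c hc).2)
      _ = (∑ c ∈ Finset.range k, Gc k a s q e c t) + (k + 1) * k ^ e := by
          rw [Finset.sum_add_distrib, Finset.sum_const, smul_eq_mul, Finset.card_range, h2]

lemma Fb_le (s q e : ℕ) (t : ZMod k) : Fb k a s q e t ≤ k ^ s := by
  unfold GRSAux.Fb
  calc _ ≤ (Finset.Ico (q * k ^ s) ((q + 1) * k ^ s)).card := Finset.card_filter_le _ _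
    _ = k ^ s := by
        rw [Nat.card_Ico]
        have : (q + 1) * k ^ s = q * k ^ s + k ^ s := by ring
        omega

lemma E_split (s Q e : ℕ) (t : ZMod k) :
    E k a ((Q + 1) * k ^ s) e t = E k a (Q * k ^ s) e t + Fb k a s Q e t := by
  unfold GRSAux.E GRSAux.Fb
  have hle : Q * k ^ s ≤ (Q + 1) * k ^ s := Nat.mul_le_mul_right _ (by omega)
  rw [Finset.range_eq_Ico, Finset.range_eq_Ico]
  rw [← Finset.Ico_union_Ico_eq_Ico (Nat.zero_le (Q * k ^ s)) hle, Finset.filter_union]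
  exact Finset.card_union_of_disjoint (Finset.disjoint_filter_filter (p := fun n => d k a e n = t) (q := fun n => d k a e n = t)
    (Finset.Ico_disjoint_Ico_consecutive (0 : ℕ) (Q * k ^ s) ((Q + 1) * k ^ s)))

lemma E_bounds (hg : Admissible k g)
    (ha : ∀ n : ℕ, 1 ≤ n → ∀ j : ℕ, j < k → a (n * k + j) = a n + g j (n : ℤ))
    (hk2 : 2 ≤ k) (s e : ℕ) (he : 1 ≤ e) (hs : e + 1 ≤ s) (t : ZMod k) :
    ∀ Q, E k a (Q * k ^ s) e t ≤ Q * k ^ (s - 1) + Q * ((k + 1) * k ^ e) + k ^ s ∧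
      Q * k ^ (s - 1) ≤ E k a (Q * k ^ s) e t + Q * ((k + 1) * k ^ e) + k ^ s := by
  intro Q
  induction Q with
  | zero => simp [GRSAux.E]
  | succ Q IHQ =>
      rw [E_split]
      rcases Nat.eq_zero_or_pos Q with hQ0 | hQ1
      · subst hQ0
        have h1 := Fb_le (a := a) s 0 e t
        have h2 : E k a (0 * k ^ s) e t = 0 := by simp [GRSAux.E]
        have h3 : k ^ (s - 1) ≤ k ^ s := Nat.pow_le_pow_right (by omega) (by omega)
        omega
      · have hFb := Fb_bounds hg ha hk2 s Q e he hs hQ1 t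
        have h1 : (Q + 1) * k ^ (s - 1) = Q * k ^ (s - 1) + k ^ (s - 1) := by ring
        have h2 : (Q + 1) * ((k + 1) * k ^ e) = Q * ((k + 1) * k ^ e) + (k + 1) * k ^ e := by
          ring
        omega

lemma E_mono (e : ℕ) (t : ZMod k) {N M : ℕ} (h : N ≤ M) : E k a N e t ≤ E k a M e t := by
  unfold GRSAux.E
  exact Finset.card_le_card (Finset.filter_subset_filter _
    (Finset.range_subset_range.2 h))

lemma E_le (N e : ℕ) (t : ZMod k) : E k a N e t ≤ N := by
  unfold GRSAux.E
  calc _ ≤ (Finset.range N).card := Finset.card_filter_le _ _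
    _ = N := Finset.card_range N


lemma E_err (hg : Admissible k g)
    (ha : ∀ n : ℕ, 1 ≤ n → ∀ j : ℕ, j < k → a (n * k + j) = a n + g j (n : ℤ))
    (hk2 : 2 ≤ k) (e s N : ℕ) (he : 1 ≤ e) (hs : e + 1 ≤ s) (hN : k ^ s ≤ N) (t : ZMod k) :
    |(E k a N e t : ℝ) - N / k|
      ≤ 2 * (k : ℝ) ^ s + 2 * (((k : ℝ) + 1) * (k : ℝ) ^ e) * N / (k : ℝ) ^ s := by
  have hk : 0 < k := by omega
  have hB0 : 0 < k ^ s := Nat.pow_pos hk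
  obtain ⟨Q, hQdef⟩ : ∃ Q, N / k ^ s = Q := ⟨_, rfl⟩
  have hQl : Q * k ^ s ≤ N := by
    rw [← hQdef]; exact Nat.div_mul_le_self N (k ^ s)
  have hQ1 : 1 ≤ Q := by
    rw [← hQdef]; exact (Nat.one_le_div_iff hB0).2 hN
  have hQu : N ≤ (Q + 1) * k ^ s := by
    have : N / k ^ s < Q + 1 := by omega
    exact le_of_lt ((Nat.div_lt_iff_lt_mul hB0).1 this)
  -- nat bounds
  have hb1 := E_bounds hg ha hk2 s e he hs t (Q + 1)
  have hb2 := E_bounds hg ha hk2 s e he hs t Q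
  have hEub : E k a N e t ≤ (Q + 1) * k ^ (s - 1) + (Q + 1) * ((k + 1) * k ^ e) + k ^ s :=
    le_trans (E_mono e t hQu) hb1.1
  have hElb : Q * k ^ (s - 1) ≤ E k a N e t + Q * ((k + 1) * k ^ e) + k ^ s :=
    le_trans hb2.2 (by
      have := E_mono (a := a) e t hQl
      omega)
  -- move to ℝ
  have hkR : (0 : ℝ) < k := by exact_mod_cast hk
  have hBR : (0 : ℝ) < (k : ℝ) ^ s := by positivity
  set q' : ℝ := (Q : ℝ) with hq'
  set E' : ℝ := (E k a N e t : ℝ) with hE'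
  set K' : ℝ := ((k : ℝ) + 1) * (k : ℝ) ^ e with hK'
  set P' : ℝ := (k : ℝ) ^ (s - 1) with hP'
  have hPB : P' * k = (k : ℝ) ^ s := by
    rw [hP', ← pow_succ]; congr 1; omega
  have f1 : E' ≤ (q' + 1) * P' + (q' + 1) * K' + (k : ℝ) ^ s := by
    rw [hE', hq', hK', hP']
    push_cast
    exact_mod_cast hEub
  have f2 : q' * P' ≤ E' + q' * K' + (k : ℝ) ^ s := by
    rw [hE', hq', hK', hP']
    push_cast
    exact_mod_cast hElb
  have f5 : q' * (k : ℝ) ^ s ≤ N := by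
    rw [hq']; exact_mod_cast hQl
  have f6 : (N : ℝ) ≤ (q' + 1) * (k : ℝ) ^ s := by
    rw [hq']; exact_mod_cast hQu
  have f3 : q' * P' ≤ (N : ℝ) / k := by
    rw [le_div_iff₀ hkR]
    calc q' * P' * k = q' * (P' * k) := by ring
      _ = q' * (k : ℝ) ^ s := by rw [hPB]
      _ ≤ N := f5
  have f4 : (N : ℝ) / k ≤ (q' + 1) * P' := by
    rw [div_le_iff₀ hkR]
    calc (N : ℝ) ≤ (q' + 1) * (k : ℝ) ^ s := f6
      _ = (q' + 1) * P' * k := by rw [← hPB]; ring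
  have hk1R : (1 : ℝ) ≤ (k : ℝ) := by
    exact_mod_cast le_trans (by norm_num : (1:ℕ) ≤ 2) hk2
  have f7 : P' ≤ (k : ℝ) ^ s := by
    rw [hP']
    exact pow_le_pow_right₀ hk1R (by omega)
  have f8 : (1 : ℝ) ≤ q' := by rw [hq']; exact_mod_cast hQ1
  have hK0 : 0 ≤ K' := by rw [hK']; positivity
  have fq : q' ≤ (N : ℝ) / (k : ℝ) ^ s := by
    rw [le_div_iff₀ hBR]; exact f5
  have hqK : q' * K' ≤ K' * ((N : ℝ) / (k : ℝ) ^ s) := by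
    calc q' * K' = K' * q' := by ring
      _ ≤ K' * ((N : ℝ) / (k : ℝ) ^ s) := by
          exact mul_le_mul_of_nonneg_left fq hK0
  rw [abs_le]
  constructor
  · -- lower: -(2B + 2KN/B) ≤ E' - N/k
    have : (N : ℝ) / k - E' ≤ P' + q' * K' + (k : ℝ) ^ s := by linarith
    have h2 : (N : ℝ) / k - E' ≤ 2 * (k : ℝ) ^ s + 2 * K' * N / (k : ℝ) ^ s := by
      have hKN : 0 ≤ K' * ((N : ℝ) / (k : ℝ) ^ s) := by
        apply mul_nonneg hK0
        positivity
      have : (N : ℝ) / k - E' ≤ P' + K' * ((N : ℝ) / (k : ℝ) ^ s) + (k : ℝ) ^ s := by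
        linarith
      have hrw : 2 * K' * N / (k : ℝ) ^ s = 2 * (K' * ((N : ℝ) / (k : ℝ) ^ s)) := by
        ring
      rw [hrw]
      linarith
    linarith [h2]
  · -- upper
    have h1 : E' - (N : ℝ) / k ≤ P' + (q' + 1) * K' + (k : ℝ) ^ s := by linarith
    have h3 : (q' + 1) * K' ≤ 2 * (q' * K') := by nlinarith
    have h4 : E' - (N : ℝ) / k ≤ (k : ℝ) ^ s + 2 * (K' * ((N : ℝ) / (k : ℝ) ^ s)) + (k : ℝ) ^ s := by
      linarith [h1, h3, hqK, f7]
    have hrw : 2 * K' * N / (k : ℝ) ^ s = 2 * (K' * ((N : ℝ) / (k : ℝ) ^ s)) := by ring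
    rw [hrw]
    linarith [h4]

lemma E_tendsto (hg : Admissible k g)
    (ha : ∀ n : ℕ, 1 ≤ n → ∀ j : ℕ, j < k → a (n * k + j) = a n + g j (n : ℤ))
    (hk2 : 2 ≤ k) (e : ℕ) (he : 1 ≤ e) (t : ZMod k) :
    Filter.Tendsto (fun N : ℕ => (E k a N e t : ℝ) / N) Filter.atTop (𝓝 (1 / k)) := by
  have hk : 0 < k := by omega
  have hkR : (0 : ℝ) < k := by exact_mod_cast hk
  rw [Metric.tendsto_atTop]
  intro ε hε
  set K' : ℝ := ((k : ℝ) + 1) * (k : ℝ) ^ e with hK'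
  have hK0 : 0 < K' := by rw [hK']; positivity
  -- choose s with 2K'/k^s < ε/2 and s ≥ e+1
  obtain ⟨s₀, hs₀⟩ := pow_unbounded_of_one_lt (4 * K' / ε) (by exact_mod_cast hk2 : (1:ℝ) < k)
  set s := max s₀ (e + 1) with hsdef
  have hse : e + 1 ≤ s := le_max_right _ _
  have hk1R : (1 : ℝ) ≤ (k : ℝ) := by
    exact_mod_cast le_trans (by norm_num : (1:ℕ) ≤ 2) hk2
  have hpows : 4 * K' / ε < (k : ℝ) ^ s :=
    lt_of_lt_of_le hs₀ (pow_le_pow_right₀ hk1R (le_max_left _ _))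
  have hBR : (0 : ℝ) < (k : ℝ) ^ s := by positivity
  have hKs : 2 * K' / (k : ℝ) ^ s < ε / 2 := by
    rw [div_lt_iff₀ hBR]
    rw [div_lt_iff₀ hε] at hpows
    nlinarith
  -- choose N₀
  obtain ⟨N₁, hN₁⟩ := exists_nat_gt (4 * (k : ℝ) ^ s / ε)
  refine ⟨max (k ^ s) N₁, fun N hN => ?_⟩
  have hNs : k ^ s ≤ N := le_trans (le_max_left _ _) hN
  have hN₁' : N₁ ≤ N := le_trans (le_max_right _ _) hN
  have hN0 : 0 < N := lt_of_lt_of_le (Nat.pow_pos hk) hNs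
  have hNR : (0 : ℝ) < N := by exact_mod_cast hN0
  have herr := E_err hg ha hk2 e s N he hse hNs t
  have hgoal : |(E k a N e t : ℝ) / N - 1 / k| < ε := by
    have hdiv : (E k a N e t : ℝ) / N - 1 / k = ((E k a N e t : ℝ) - N / k) / N := by
      rw [sub_div]
      congr 1
      rw [div_div, mul_comm, ← div_div, div_self hNR.ne']
    rw [hdiv, abs_div, abs_of_pos hNR, div_lt_iff₀ hNR]
    have h1 : |(E k a N e t : ℝ) - N / k|
        ≤ 2 * (k : ℝ) ^ s + 2 * K' * N / (k : ℝ) ^ s := herr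
    have h2 : 2 * (k : ℝ) ^ s < ε / 2 * N := by
      have : 4 * (k : ℝ) ^ s / ε < N := lt_of_lt_of_le hN₁ (by exact_mod_cast hN₁')
      rw [div_lt_iff₀ hε] at this
      nlinarith
    have h3 : 2 * K' * N / (k : ℝ) ^ s ≤ ε / 2 * N := by
      rw [div_le_iff₀ hBR]
      have := le_of_lt hKs
      rw [div_le_iff₀ hBR] at this
      nlinarith
    linarith
  simpa [Real.dist_eq] using hgoal


lemma cast_ahat {ahat : ℕ → ℕ} (h2 : ∀ n, ((ahat n : ℤ)) % (k : ℤ) = a n % (k : ℤ)) (n : ℕ) :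
    ((ahat n : ℕ) : ZMod k) = ((a n : ℤ) : ZMod k) := by
  have h : (((ahat n : ℕ) : ℤ) : ZMod k) = ((a n : ℤ) : ZMod k) := by
    rw [ZMod.intCast_eq_intCast_iff]
    exact h2 n
  simpa using h

lemma d_zero_iff {ahat : ℕ → ℕ} (hk : 0 < k) (hub : ∀ n, ahat n < k)
    (h2 : ∀ n, ((ahat n : ℤ)) % (k : ℤ) = a n % (k : ℤ)) (r n : ℕ) :
    d k a r n = 0 ↔ ahat n = ahat (n + r) := by
  unfold GRSAux.d
  rw [sub_eq_zero, ← cast_ahat h2 n, ← cast_ahat h2 (n + r)]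
  constructor
  · intro h
    have := congrArg ZMod.val h
    rw [ZMod.val_cast_of_lt (hub (n + r)), ZMod.val_cast_of_lt (hub n)] at this
    exact this.symm
  · intro h; rw [h]

lemma sum_delta {ahat : ℕ → ℕ} (hk : 0 < k) (hub : ∀ n, ahat n < k)
    (h2 : ∀ n, ((ahat n : ℤ)) % (k : ℤ) = a n % (k : ℤ)) (N r : ℕ) :
    (∑ n ∈ Finset.range N, (if ahat n = ahat (n + r) then (0 : ℝ) else 1))
      = N - E k a N r 0 := by
  have hterm : ∀ n, (if ahat n = ahat (n + r) then (0 : ℝ) else 1)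
      = 1 - (if d k a r n = 0 then (1 : ℝ) else 0) := by
    intro n
    by_cases h : d k a r n = 0
    · rw [if_pos h, if_pos ((d_zero_iff hk hub h2 r n).1 h)]; ring
    · rw [if_neg h, if_neg (fun hc => h ((d_zero_iff hk hub h2 r n).2 hc))]; ring
  rw [Finset.sum_congr rfl (fun n _ => hterm n), Finset.sum_sub_distrib,
    Finset.sum_const, Finset.card_range, Finset.sum_boole]
  unfold GRSAux.E
  simp

end GRSAux

/-- For `k` prime and a generalized Rudin–Shapiro sequence `â` over
`{0,…,k-1}`, `inf_{r>0} C_{(0,r)} = 1 - 1/k`, where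
`C_{(0,r)} = liminf_{N→∞} (1/N) Σ_{n<N} δ(n, n+r)`. -/
theorem genRudinShapiro_inf_correlation
    (k : ℕ) (hk : k.Prime) (g : ℕ → ℤ → ℤ) (a : ℕ → ℤ) (ahat : ℕ → ℕ)
    (hg : Admissible k g) (ha : IsGenRudinShapiro k g a ahat) :
    sInf {y : ℝ | ∃ r : ℕ, 0 < r ∧
        y = Filter.liminf (fun N : ℕ =>
          (∑ n ∈ Finset.range N, (if ahat n = ahat (n + r) then (0 : ℝ) else 1)) / N)
          Filter.atTop}
      = 1 - 1 / (k : ℝ) := by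
  obtain ⟨hub, hmod, hrec⟩ := ha
  have hk2 : 2 ≤ k := hk.two_le
  have hk0 : 0 < k := by omega
  have hTend : ∀ r : ℕ, 0 < r →
      Filter.Tendsto (fun N : ℕ =>
        (∑ n ∈ Finset.range N, (if ahat n = ahat (n + r) then (0 : ℝ) else 1)) / N)
        Filter.atTop (𝓝 (1 - 1 / (k : ℝ))) := by
    intro r hr
    have h1 := GRSAux.E_tendsto hg hrec hk2 r hr 0
    have h2 : Filter.Tendsto (fun N : ℕ => 1 - (GRSAux.E k a N r 0 : ℝ) / N)
        Filter.atTop (𝓝 (1 - 1 / (k : ℝ))) := tendsto_const_nhds.sub h1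
    apply h2.congr'
    filter_upwards [Filter.eventually_ge_atTop 1] with N hN
    have hNR : (0 : ℝ) < N := by exact_mod_cast hN
    rw [GRSAux.sum_delta hk0 hub hmod N r, sub_div, div_self hNR.ne']
  have hSeq : {y : ℝ | ∃ r : ℕ, 0 < r ∧
      y = Filter.liminf (fun N : ℕ =>
        (∑ n ∈ Finset.range N, (if ahat n = ahat (n + r) then (0 : ℝ) else 1)) / N)
        Filter.atTop} = {1 - 1 / (k : ℝ)} := by
    ext y
    simp only [Set.mem_setOf_eq, Set.mem_singleton_iff]
    constructor
    · rintro ⟨r, hr, rfl⟩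
      exact (hTend r hr).liminf_eq
    · intro hy
      exact ⟨1, one_pos, by rw [hy, (hTend 1 one_pos).liminf_eq]⟩
  rw [hSeq, csInf_singleton]
end
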